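/- arXiv:1906.04930 — 6 statements merged into one kernel-verified Lean document; each statement's English description precedes it below -/
import Mathlib

section
/- The process M_n = a_n·S_n, n ≥ 1, where a_n = Γ(p−q+1)·Γ(n)/Γ(n+p−q), is a martingale with respect to the filtration G_n = σ(X_1,…,X_n). -/
open MeasureTheory ProbabilityTheory Filter Real
open scoped ENNReal NNReal Topology Classical

noncomputable section

/-- The σ-algebra `σ(X_1, …, X_n)` generated by the first `n` steps. -/
def sigmaUpTo {Ω : Type*} (X : ℕ → Ω → ℝ) (n : ℕ) : MeasurableSpace Ω :=
  MeasurableSpace.comap (fun ω (k : Fin n) => X ((k : ℕ) + 1) ω) inferInstance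

/-- Weak convergence of a sequence of measures on `ℝ` (convergence in distribution):
integrals of every bounded continuous function converge. -/
def TendstoInDist (μs : ℕ → Measure ℝ) (ν : Measure ℝ) : Prop :=
  ∀ f : BoundedContinuousFunction ℝ ℝ,
    Tendsto (fun n => ∫ x, f x ∂(μs n)) atTop (𝓝 (∫ x, f x ∂ν))

/-- `Mₙ = aₙ·Sₙ` with `aₙ = Γ(p−q+1)·Γ(n)/Γ(n+p−q)` is a martingale with
respect to the filtration `𝒢ₙ = σ(X₁,…,Xₙ)`: it is integrable, adapted, and satisfies
the martingale property `E(M_{n+1} ∣ 𝒢ₙ) = Mₙ` a.s. -/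
theorem erwd_full_memory_martingale
    {Ω : Type*} [MeasurableSpace Ω] (P : Measure Ω) [IsProbabilityMeasure P]
    (p q r : ℝ) (hp : 0 < p) (hp1 : p < 1) (hq : 0 < q) (hq1 : q < 1)
    (hr : 0 < r) (hr1 : r < 1) (hpqr : p + q + r = 1)
    (X : ℕ → Ω → ℝ) (hXmeas : ∀ n, Measurable (X n))
    (hXval : ∀ n, 1 ≤ n → ∀ ω, X n ω = 1 ∨ X n ω = -1 ∨ X n ω = 0)
    (hX1p : P {ω | X 1 ω = 1} = ENNReal.ofReal p)
    (hX1q : P {ω | X 1 ω = -1} = ENNReal.ofReal q)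
    (hX1r : P {ω | X 1 ω = 0} = ENNReal.ofReal r)
    (hcondp : ∀ n : ℕ, 1 ≤ n →
      P[Set.indicator {ω | X (n + 1) ω = 1} (fun _ => (1 : ℝ)) | sigmaUpTo X n]
        =ᵐ[P] fun ω =>
          (p * (((Finset.Icc 1 n).filter (fun k => X k ω = 1)).card : ℝ)
            + q * (((Finset.Icc 1 n).filter (fun k => X k ω = -1)).card : ℝ)) / n)
    (hcondq : ∀ n : ℕ, 1 ≤ n →
      P[Set.indicator {ω | X (n + 1) ω = -1} (fun _ => (1 : ℝ)) | sigmaUpTo X n]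
        =ᵐ[P] fun ω =>
          (q * (((Finset.Icc 1 n).filter (fun k => X k ω = 1)).card : ℝ)
            + p * (((Finset.Icc 1 n).filter (fun k => X k ω = -1)).card : ℝ)) / n)
    (a : ℕ → ℝ)
    (ha : ∀ n : ℕ, 1 ≤ n →
      a n = Real.Gamma (p - q + 1) * Real.Gamma (n : ℝ) / Real.Gamma ((n : ℝ) + p - q))
    (M : ℕ → Ω → ℝ) (hM : ∀ n ω, M n ω = a n * ∑ k ∈ Finset.Icc 1 n, X k ω) :
    (∀ n : ℕ, 1 ≤ n → Integrable (M n) P) ∧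
    (∀ n : ℕ, 1 ≤ n → StronglyMeasurable[sigmaUpTo X n] (M n)) ∧
    (∀ n : ℕ, 1 ≤ n → P[M (n + 1) | sigmaUpTo X n] =ᵐ[P] M n) := by
  -- basic measurability facts
  have hXG : ∀ n k : ℕ, 1 ≤ k → k ≤ n → Measurable[sigmaUpTo X n] (X k) := by
    intro n k hk1 hkn
    have hmeas : Measurable[sigmaUpTo X n] (fun ω (j : Fin n) => X ((j : ℕ) + 1) ω) :=
      Measurable.of_comap_le le_rfl
    have := (measurable_pi_apply (⟨k - 1, by omega⟩ : Fin n)).comp hmeas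
    simpa [Function.comp_def, Nat.sub_add_cancel hk1] using this
  have hle : ∀ n : ℕ, sigmaUpTo X n ≤ ‹MeasurableSpace Ω› := by
    intro n
    exact Measurable.comap_le (measurable_pi_lambda _ fun j => hXmeas _)
  have hSmeasG : ∀ n : ℕ, Measurable[sigmaUpTo X n]
      (fun ω => ∑ k ∈ Finset.Icc 1 n, X k ω) := by
    intro n
    apply Finset.measurable_sum
    intro k hk
    rw [Finset.mem_Icc] at hk
    exact hXG n k hk.1 hk.2
  have hMadapt : ∀ n : ℕ, 1 ≤ n → StronglyMeasurable[sigmaUpTo X n] (M n) := by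
    intro n hn
    have : M n = fun ω => a n * ∑ k ∈ Finset.Icc 1 n, X k ω := funext fun ω => hM n ω
    rw [this]
    exact ((measurable_const.mul (hSmeasG n)).stronglyMeasurable)
  -- integrability
  have hXint : ∀ k : ℕ, 1 ≤ k → Integrable (X k) P := by
    intro k hk
    refine Integrable.mono' (integrable_const (1 : ℝ)) (hXmeas k).aestronglyMeasurable ?_
    filter_upwards with ω
    rcases hXval k hk ω with h | h | h <;> simp [h]
  have hSint : ∀ n : ℕ, Integrable (fun ω => ∑ k ∈ Finset.Icc 1 n, X k ω) P := by
    intro n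
    apply integrable_finset_sum
    intro k hk
    rw [Finset.mem_Icc] at hk
    exact hXint k hk.1
  have hMint : ∀ n : ℕ, 1 ≤ n → Integrable (M n) P := by
    intro n hn
    have : M n = fun ω => a n * ∑ k ∈ Finset.Icc 1 n, X k ω := funext fun ω => hM n ω
    rw [this]
    exact (hSint n).const_mul _
  refine ⟨hMint, hMadapt, ?_⟩
  -- martingale property
  intro n hn
  have hn0 : (n : ℝ) ≠ 0 := Nat.cast_ne_zero.mpr (by omega)
  have hnpq : (0 : ℝ) < (n : ℝ) + p - q := by
    have h1 : (1 : ℝ) ≤ (n : ℝ) := by exact_mod_cast hn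
    linarith
  -- the key Gamma identity : a (n+1) * (n + p - q) = a n * n
  have hkey : a (n + 1) * ((n : ℝ) + p - q) = a n * (n : ℝ) := by
    have hnR : (0 : ℝ) < (n : ℝ) := by positivity
    have hG1 : Real.Gamma ((n : ℝ) + 1) = (n : ℝ) * Real.Gamma (n : ℝ) :=
      Real.Gamma_add_one (ne_of_gt hnR)
    have hG2 : Real.Gamma (((n : ℝ) + 1) + p - q)
        = ((n : ℝ) + p - q) * Real.Gamma ((n : ℝ) + p - q) := by
      have h : ((n : ℝ) + 1) + p - q = ((n : ℝ) + p - q) + 1 := by ring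
      rw [h, Real.Gamma_add_one (ne_of_gt hnpq)]
    have hGpos : 0 < Real.Gamma ((n : ℝ) + p - q) := Real.Gamma_pos_of_pos hnpq
    rw [ha n hn, ha (n + 1) (by omega)]
    push_cast
    rw [hG1, hG2]
    field_simp
  have hs1 : MeasurableSet {ω | X (n + 1) ω = 1} := hXmeas (n + 1) (measurableSet_singleton 1)
  have hs2 : MeasurableSet {ω | X (n + 1) ω = -1} :=
    hXmeas (n + 1) (measurableSet_singleton (-1))
  have hI1int : Integrable ({ω | X (n + 1) ω = 1}.indicator fun _ => (1 : ℝ)) P :=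
    (integrable_const (1 : ℝ)).indicator hs1
  have hI2int : Integrable ({ω | X (n + 1) ω = -1}.indicator fun _ => (1 : ℝ)) P :=
    (integrable_const (1 : ℝ)).indicator hs2
  have hMsucc : M (n + 1) = a (n + 1) •
      ((fun ω => ∑ k ∈ Finset.Icc 1 n, X k ω) +
        ({ω | X (n + 1) ω = 1}.indicator (fun _ => (1 : ℝ)) -
          {ω | X (n + 1) ω = -1}.indicator (fun _ => (1 : ℝ)))) := by
    funext ω
    rw [hM, Finset.sum_Icc_succ_top (by omega : 1 ≤ n + 1)]
    have hX : X (n + 1) ω = {ω | X (n + 1) ω = 1}.indicator (fun _ => (1 : ℝ)) ω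
        - {ω | X (n + 1) ω = -1}.indicator (fun _ => (1 : ℝ)) ω := by
      rcases hXval (n + 1) (by omega) ω with h | h | h <;>
        norm_num [Set.indicator_apply, h]
    simp only [Pi.smul_apply, Pi.add_apply, Pi.sub_apply, smul_eq_mul]
    rw [hX]
  have hScond : P[(fun ω => ∑ k ∈ Finset.Icc 1 n, X k ω) | sigmaUpTo X n]
      = fun ω => ∑ k ∈ Finset.Icc 1 n, X k ω :=
    condExp_of_stronglyMeasurable (hle n) ((hSmeasG n).stronglyMeasurable) (hSint n)
  calc P[M (n + 1) | sigmaUpTo X n]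
      =ᵐ[P] a (n + 1) • P[(fun ω => ∑ k ∈ Finset.Icc 1 n, X k ω) +
          ({ω | X (n + 1) ω = 1}.indicator (fun _ => (1 : ℝ)) -
            {ω | X (n + 1) ω = -1}.indicator (fun _ => (1 : ℝ))) | sigmaUpTo X n] := by
        rw [hMsucc]; exact condExp_smul _ _ _
    _ =ᵐ[P] a (n + 1) • (P[(fun ω => ∑ k ∈ Finset.Icc 1 n, X k ω) | sigmaUpTo X n] +
          (P[{ω | X (n + 1) ω = 1}.indicator (fun _ => (1 : ℝ)) | sigmaUpTo X n] -
            P[{ω | X (n + 1) ω = -1}.indicator (fun _ => (1 : ℝ)) | sigmaUpTo X n])) := by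
        have h1 := condExp_add (μ := P) (m := sigmaUpTo X n) (hSint n) (hI1int.sub hI2int)
        have h2 := condExp_sub (μ := P) (m := sigmaUpTo X n) hI1int hI2int
        filter_upwards [h1, h2] with ω h1ω h2ω
        simp only [Pi.smul_apply, Pi.add_apply, Pi.sub_apply]
        rw [h1ω]
        simp only [Pi.add_apply]
        rw [h2ω]
        simp only [Pi.sub_apply]
    _ =ᵐ[P] M n := by
        rw [hScond]
        filter_upwards [hcondp n hn, hcondq n hn] with ω hpω hqω
        simp only [Pi.smul_apply, Pi.add_apply, Pi.sub_apply, smul_eq_mul]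
        rw [hpω, hqω, hM n ω]
        have hSum : ∑ k ∈ Finset.Icc 1 n, X k ω
            = (((Finset.Icc 1 n).filter (fun k => X k ω = 1)).card : ℝ)
              - (((Finset.Icc 1 n).filter (fun k => X k ω = -1)).card : ℝ) := by
          have h : ∀ k ∈ Finset.Icc 1 n, X k ω
              = (if X k ω = 1 then (1 : ℝ) else 0)
                - (if X k ω = -1 then (1 : ℝ) else 0) := by
            intro k hk
            rw [Finset.mem_Icc] at hk
            rcases hXval k hk.1 ω with h | h | h <;> norm_num [h]
          rw [Finset.sum_congr rfl h, Finset.sum_sub_distrib]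
          simp [Finset.sum_boole]
        rw [hSum]
        set s := (((Finset.Icc 1 n).filter (fun k => X k ω = 1)).card : ℝ) with hs
        set t := (((Finset.Icc 1 n).filter (fun k => X k ω = -1)).card : ℝ) with ht
        field_simp
        linear_combination (s - t) * hkey
end
end

section
/- Let p, q be real numbers with 0 < p, q < 1, set a_n = Γ(p−q+1)·Γ(n)/Γ(n+p−q) for n ≥ 1, and ν_n = Σ_{k=1}^n a_k². Then: (i) if p − q < 1/2, then ν_n / n^{1−2(p−q)} → (Γ(p−q+1))² / (1 − 2(p−q)) as n → ∞; (ii) if p − q = 1/2, then ν_n / log n → π/4 as n → ∞; (iii) if p − q > 1/2, then the sequence (ν_n) is bounded. -/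
open MeasureTheory ProbabilityTheory Filter Real
open scoped ENNReal NNReal Topology Classical

noncomputable section

/-- Stolz–Cesàro-type comparison. -/
lemma aux_sum_div {C G : ℕ → ℝ} {L : ℝ}
    (hG0 : ∀ k, 0 ≤ G k) (hGne : ∀ᶠ k in atTop, G k ≠ 0)
    (hdiv : Tendsto (fun n => ∑ i ∈ Finset.range n, G i) atTop atTop)
    (hratio : Tendsto (fun k => C k / G k) atTop (𝓝 L)) :
    Tendsto (fun n => (∑ i ∈ Finset.range n, C i) / (∑ i ∈ Finset.range n, G i))
      atTop (𝓝 L) := by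
  have h1 : (fun k => C k - L * G k) =o[atTop] G := by
    rw [Asymptotics.isLittleO_iff_tendsto' (by
      filter_upwards [hGne] with k hk h; exact absurd h hk)]
    have h2 : Tendsto (fun k => C k / G k - L) atTop (𝓝 (L - L)) := hratio.sub_const L
    rw [sub_self] at h2
    apply h2.congr'
    filter_upwards [hGne] with k hk
    field_simp
  have h2 := h1.sum_range hG0 hdiv
  have h3 : Tendsto
      (fun n => ((∑ i ∈ Finset.range n, C i) - L * ∑ i ∈ Finset.range n, G i)
        / (∑ i ∈ Finset.range n, G i)) atTop (𝓝 0) := by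
    have := h2.tendsto_div_nhds_zero
    apply this.congr
    intro n
    rw [Finset.sum_sub_distrib, ← Finset.mul_sum]
  have h4 : ∀ᶠ n in atTop, (∑ i ∈ Finset.range n, G i) ≠ 0 :=
    (hdiv.eventually_gt_atTop 0).mono fun n h => h.ne'
  have h5 := h3.add_const L
  rw [zero_add] at h5
  apply h5.congr'
  filter_upwards [h4] with n hn
  field_simp
  ring

/-- slope limit along `1 - 1/(n+1)`. -/
lemma aux_slope {f : ℝ → ℝ} {d : ℝ} (hd : HasDerivAt f d 1) :
    Tendsto (fun n : ℕ => (f 1 - f (1 - 1/((n:ℝ)+1))) * ((n:ℝ)+1)) atTop (𝓝 d) := by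
  have hy : Tendsto (fun n : ℕ => 1 - 1/((n:ℝ)+1)) atTop (𝓝[≠] (1:ℝ)) := by
    apply tendsto_nhdsWithin_of_tendsto_nhds_of_eventually_within
    · have := tendsto_one_div_add_atTop_nhds_zero_nat (𝕜 := ℝ)
      have h2 := (tendsto_const_nhds (x := (1:ℝ))).sub this
      rw [sub_zero] at h2
      exact h2.congr fun n => by norm_num
    · filter_upwards with n
      have h1 : (0:ℝ) < 1/((n:ℝ)+1) := by positivity
      simp only [Set.mem_compl_iff, Set.mem_singleton_iff]
      intro h
      nlinarith
  have := (hasDerivAt_iff_tendsto_slope.mp hd).comp hy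
  apply this.congr
  intro n
  have hc : ((n:ℝ)+1) ≠ 0 := by positivity
  simp only [Function.comp_apply, slope_def_field]
  rw [show (1 - 1/((n:ℝ)+1)) - 1 = -(1/((n:ℝ)+1)) by ring]
  field_simp
  ring

lemma aux_gamma_lim (r : ℝ) (hr1 : -1 < r) (a : ℕ → ℝ)
    (ha : ∀ n : ℕ, 1 ≤ n →
      a n = Real.Gamma (r+1) * Real.Gamma (n : ℝ) / Real.Gamma ((n:ℝ) + r)) :
    Tendsto (fun n : ℕ => a n * (n:ℝ) ^ r) atTop (𝓝 (Real.Gamma (r+1))) := by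
  have hΓ1 : 0 < Real.Gamma (r+1) := Real.Gamma_pos_of_pos (by linarith)
  rcases eq_or_ne r 0 with h0 | h0
  · subst h0
    apply tendsto_const_nhds.congr'
    filter_upwards [eventually_ge_atTop 1] with n hn
    have hnpos : (0:ℝ) < n := by exact_mod_cast hn
    rw [ha n hn, Real.rpow_zero]
    simp [Real.Gamma_one, (Real.Gamma_pos_of_pos hnpos).ne']
  · have hprod : ∀ n : ℕ, ∏ j ∈ Finset.range (n+1), (r + (j:ℝ)) =
        r * Real.Gamma ((n:ℝ)+1+r) / Real.Gamma (r+1) := by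
      intro n
      induction n with
      | zero =>
        rw [Finset.prod_range_one]
        push_cast
        rw [show (0:ℝ)+1+r = r+1 by ring, mul_div_cancel_right₀ _ hΓ1.ne']
        ring
      | succ n ih =>
        rw [Finset.prod_range_succ, ih]
        have hpos : (0:ℝ) < (n:ℝ)+1+r := by
          have : (0:ℝ) ≤ (n:ℝ) := n.cast_nonneg
          linarith
        rw [show ((n+1:ℕ):ℝ)+1+r = ((n:ℝ)+1+r) + 1 by push_cast; ring,
          Real.Gamma_add_one hpos.ne']
        push_cast
        field_simp
        ring
    have key : ∀ᶠ n : ℕ in atTop,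
        (fun m : ℕ => a m * (m:ℝ) ^ r) (n+1) =
          (r * Real.GammaSeq r n) * (((n:ℝ)+1)/(n:ℝ)) ^ r := by
      filter_upwards [eventually_ge_atTop 1] with n hn
      have hn0 : (0:ℝ) < n := by exact_mod_cast hn
      have hpos : (0:ℝ) < (n:ℝ)+1+r := by linarith
      have hΓn : (0:ℝ) < Real.Gamma ((n:ℝ)+1+r) := Real.Gamma_pos_of_pos hpos
      have hnr : (0:ℝ) < (n:ℝ) ^ r := Real.rpow_pos_of_pos hn0 r
      have hfac : (0:ℝ) < ((Nat.factorial n : ℕ) : ℝ) := by exact_mod_cast n.factorial_pos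
      show a (n+1) * (((n+1:ℕ)):ℝ) ^ r = _
      rw [ha (n+1) (by omega), Real.GammaSeq, hprod n,
        Real.div_rpow (by linarith : (0:ℝ) ≤ (n:ℝ)+1) hn0.le]
      push_cast
      rw [Real.Gamma_nat_eq_factorial n]
      field_simp
    have hGS := (Real.GammaSeq_tendsto_Gamma r).const_mul r
    have hbase : Tendsto (fun n : ℕ => ((n:ℝ)+1)/(n:ℝ)) atTop (𝓝 1) := by
      have h1 : Tendsto (fun n : ℕ => 1 + 1/(n:ℝ)) atTop (𝓝 (1+0)) :=
        tendsto_const_nhds.add tendsto_one_div_atTop_nhds_zero_nat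
      rw [add_zero] at h1
      apply h1.congr'
      filter_upwards [eventually_ge_atTop 1] with n hn
      have hn0 : (0:ℝ) < n := by exact_mod_cast hn
      field_simp
    have hq1 : Tendsto (fun n : ℕ => (((n:ℝ)+1)/(n:ℝ)) ^ r) atTop (𝓝 1) := by
      have hcont := (Real.continuousAt_rpow_const 1 r (Or.inl one_ne_zero)).tendsto.comp hbase
      simpa [Real.one_rpow, Function.comp_def] using hcont
    have hlim := hGS.mul hq1
    rw [mul_one, ← Real.Gamma_add_one h0] at hlim
    refine (tendsto_add_atTop_iff_nat 1).mp (Tendsto.congr' ?_ hlim)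
    exact (EventuallyEq.symm key)


/-- asymptotics of `νₙ = ∑_{k=1}^n aₖ²` where
`aₙ = Γ(p−q+1)·Γ(n)/Γ(n+p−q)`: diffusive, critical and superdiffusive regimes. -/
theorem nu_asymptotics (p q : ℝ) (hp : 0 < p) (hp1 : p < 1) (hq : 0 < q) (hq1 : q < 1)
    (a : ℕ → ℝ)
    (ha : ∀ n : ℕ, 1 ≤ n →
      a n = Real.Gamma (p - q + 1) * Real.Gamma (n : ℝ) / Real.Gamma ((n : ℝ) + p - q))
    (ν : ℕ → ℝ) (hν : ∀ n : ℕ, ν n = ∑ k ∈ Finset.Icc 1 n, (a k) ^ 2) :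
    (p - q < 1 / 2 →
      Tendsto (fun n : ℕ => ν n / (n : ℝ) ^ (1 - 2 * (p - q))) atTop
        (𝓝 ((Real.Gamma (p - q + 1)) ^ 2 / (1 - 2 * (p - q))))) ∧
    (p - q = 1 / 2 →
      Tendsto (fun n : ℕ => ν n / Real.log n) atTop (𝓝 (Real.pi / 4))) ∧
    (p - q > 1 / 2 → ∃ C : ℝ, ∀ n : ℕ, ν n ≤ C) := by
  set r := p - q with hrdef
  have hr1 : -1 < r := by rw [hrdef]; linarith
  have hr2 : r < 1 := by rw [hrdef]; linarith
  have hΓ1 : 0 < Real.Gamma (r+1) := Real.Gamma_pos_of_pos (by linarith)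
  have hb : Tendsto (fun n : ℕ => a n * (n:ℝ) ^ r) atTop (𝓝 (Real.Gamma (r+1))) := by
    refine aux_gamma_lim r hr1 a ?_
    intro n hn
    rw [ha n hn, add_sub_assoc, ← hrdef]
  have hb2 : Tendsto (fun n : ℕ => a n ^ 2 * (n:ℝ) ^ (2*r)) atTop
      (𝓝 (Real.Gamma (r+1) ^ 2)) := by
    have h := hb.mul hb
    rw [← sq] at h
    apply h.congr'
    filter_upwards [eventually_gt_atTop 0] with n hn
    have hn0 : (0:ℝ) < n := by exact_mod_cast hn
    rw [show (2:ℝ)*r = r + r by ring, Real.rpow_add hn0]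
    ring
  have hC : ∀ n : ℕ, ν n = ∑ i ∈ Finset.range n, a (i+1) ^ 2 := by
    intro n
    rw [hν n, show Finset.Icc 1 n = Finset.Ico 1 (n+1) from (Finset.Ico_add_one_right_eq_Icc 1 n).symm,
      Finset.sum_Ico_eq_sum_range, Nat.add_sub_cancel]
    exact Finset.sum_congr rfl fun i _ => by rw [Nat.add_comm]
  have hA2 : Tendsto (fun i : ℕ => a (i+1) ^ 2 * ((i:ℝ)+1) ^ (2*r)) atTop
      (𝓝 (Real.Gamma (r+1) ^ 2)) := by
    have h := hb2.comp (tendsto_add_atTop_nat 1)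
    apply h.congr
    intro i
    simp only [Function.comp_apply]
    push_cast
    ring_nf
  refine ⟨?_, ?_, ?_⟩
  · -- case r < 1/2
    intro hlt
    have hs : 0 < 1 - 2*r := by linarith
    set G : ℕ → ℝ := fun i => ((i:ℝ)+1) ^ (1-2*r) - ((i:ℝ)) ^ (1-2*r) with hGdef
    have hGpos : ∀ i, 0 < G i := fun i =>
      sub_pos.mpr (Real.rpow_lt_rpow i.cast_nonneg (lt_add_one _) hs)
    have hG0 : ∀ i, 0 ≤ G i := fun i => (hGpos i).le
    have hGsum : ∀ n : ℕ, ∑ i ∈ Finset.range n, G i = (n:ℝ) ^ (1-2*r) := by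
      intro n
      induction n with
      | zero => simp [Real.zero_rpow hs.ne']
      | succ m ih =>
        rw [Finset.sum_range_succ, ih]
        simp only [hGdef]
        push_cast
        ring
    have hdiv : Tendsto (fun n => ∑ i ∈ Finset.range n, G i) atTop atTop := by
      rw [tendsto_congr hGsum]
      exact (tendsto_rpow_atTop hs).comp tendsto_natCast_atTop_atTop
    have hGlim : Tendsto (fun i : ℕ => G i * ((i:ℝ)+1) ^ (2*r)) atTop (𝓝 (1-2*r)) := by
      have hder : HasDerivAt (fun x : ℝ => x ^ (1-2*r)) (1-2*r) 1 := by
        have := Real.hasDerivAt_rpow_const (x := (1:ℝ)) (p := 1-2*r) (Or.inl one_ne_zero)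
        simpa using this
      have hsl := aux_slope hder
      apply hsl.congr
      intro i
      have hi1 : (0:ℝ) < (i:ℝ)+1 := by positivity
      have hfrac : 1/((i:ℝ)+1) ≤ 1 := by
        rw [div_le_one hi1]
        have : (0:ℝ) ≤ (i:ℝ) := i.cast_nonneg
        linarith
      have hx : (0:ℝ) ≤ 1 - 1/((i:ℝ)+1) := by linarith
      have hmul : ((i:ℝ)+1) * (1 - 1/((i:ℝ)+1)) = (i:ℝ) := by field_simp; ring
      have h2 : ((i:ℝ)) ^ (1-2*r) = ((i:ℝ)+1) ^ (1-2*r) * (1 - 1/((i:ℝ)+1)) ^ (1-2*r) := by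
        rw [← Real.mul_rpow hi1.le hx, hmul]
      have h3 : ((i:ℝ)+1) ^ (1-2*r) * ((i:ℝ)+1) ^ (2*r) = (i:ℝ)+1 := by
        rw [← Real.rpow_add hi1, show (1-2*r)+(2*r) = 1 by ring, Real.rpow_one]
      show ((fun x : ℝ => x ^ (1-2*r)) 1 - (fun x : ℝ => x ^ (1-2*r)) (1 - 1/((i:ℝ)+1)))
          * ((i:ℝ)+1) = G i * ((i:ℝ)+1) ^ (2*r)
      simp only [hGdef]
      rw [h2, Real.one_rpow]
      linear_combination (1 - (1 - 1/((i:ℝ)+1)) ^ (1-2*r)) * h3.symm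
    have hratio : Tendsto (fun i : ℕ => a (i+1) ^ 2 / G i) atTop
        (𝓝 (Real.Gamma (r+1) ^ 2 / (1-2*r))) := by
      have h := hA2.div hGlim (by linarith)
      apply h.congr
      intro i
      have hi1 : (0:ℝ) < (i:ℝ)+1 := by positivity
      simp only [Pi.div_apply]
      rw [mul_div_mul_right _ _ (Real.rpow_pos_of_pos hi1 (2*r)).ne']
    have hmain := aux_sum_div hG0 (Eventually.of_forall fun i => (hGpos i).ne') hdiv hratio
    apply hmain.congr
    intro n
    rw [hC n, hGsum n]
  · -- case r = 1/2
    intro hhalf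
    have hππ : Real.Gamma (r+1) ^ 2 = Real.pi / 4 := by
      rw [hhalf, Real.Gamma_add_one (by norm_num : (1/2:ℝ) ≠ 0), Real.Gamma_one_half_eq,
        mul_pow, Real.sq_sqrt Real.pi_pos.le]
      ring
    set G : ℕ → ℝ := fun i => Real.log ((i:ℝ)+1) - Real.log (i:ℝ) with hGdef
    have hG0 : ∀ i, 0 ≤ G i := by
      intro i
      rcases Nat.eq_zero_or_pos i with h | h
      · subst h; simp [hGdef]
      · have hi0 : (0:ℝ) < i := by exact_mod_cast h
        exact sub_nonneg.mpr (Real.log_le_log hi0 (by linarith))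
    have hGne : ∀ᶠ i : ℕ in atTop, G i ≠ 0 := by
      filter_upwards [eventually_ge_atTop 1] with i hi
      have hi0 : (0:ℝ) < i := by exact_mod_cast hi
      exact (sub_pos.mpr (Real.log_lt_log hi0 (lt_add_one _))).ne'
    have hGsum : ∀ n : ℕ, ∑ i ∈ Finset.range n, G i = Real.log (n:ℝ) := by
      intro n
      induction n with
      | zero => simp
      | succ m ih =>
        rw [Finset.sum_range_succ, ih]
        simp only [hGdef]
        push_cast
        ring
    have hdiv : Tendsto (fun n => ∑ i ∈ Finset.range n, G i) atTop atTop := by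
      rw [tendsto_congr hGsum]
      exact Real.tendsto_log_atTop.comp tendsto_natCast_atTop_atTop
    have hGlim : Tendsto (fun i : ℕ => G i * ((i:ℝ)+1)) atTop (𝓝 1) := by
      have hder : HasDerivAt Real.log 1 1 := by simpa using Real.hasDerivAt_log one_ne_zero
      have hsl := aux_slope hder
      apply hsl.congr'
      filter_upwards [eventually_ge_atTop 1] with i hi
      have hi0 : (0:ℝ) < i := by exact_mod_cast hi
      have hi1 : (0:ℝ) < (i:ℝ)+1 := by positivity
      rw [Real.log_one, show 1 - 1/((i:ℝ)+1) = (i:ℝ)/((i:ℝ)+1) by field_simp; ring,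
        Real.log_div hi0.ne' hi1.ne']
      simp only [hGdef]
      ring
    have hratio : Tendsto (fun i : ℕ => a (i+1) ^ 2 / G i) atTop
        (𝓝 (Real.Gamma (r+1) ^ 2 / 1)) := by
      have h := hA2.div hGlim one_ne_zero
      apply h.congr
      intro i
      have hi1 : (0:ℝ) < (i:ℝ)+1 := by positivity
      simp only [Pi.div_apply]
      rw [hhalf, show 2*(1/2:ℝ) = 1 by norm_num, Real.rpow_one,
        mul_div_mul_right _ _ hi1.ne']
    rw [div_one, hππ] at hratio
    have hmain := aux_sum_div hG0 hGne hdiv hratio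
    apply hmain.congr
    intro n
    rw [hC n, hGsum n]
  · -- case r > 1/2
    intro hgt
    have h2r : (1:ℝ) < 2*r := by linarith
    have hsum0 : Summable (fun i : ℕ => ((i:ℝ)+1) ^ (-(2*r))) := by
      have h1 : Summable (fun n : ℕ => ((n:ℝ)) ^ (-(2*r))) :=
        Real.summable_nat_rpow.mpr (by linarith)
      have h2 := (summable_nat_add_iff 1).mpr h1
      apply h2.congr
      intro i
      push_cast
      ring_nf
    have hBO : (fun i : ℕ => a (i+1) ^ 2) =O[atTop] (fun i : ℕ => ((i:ℝ)+1) ^ (-(2*r))) := by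
      have h1 := hA2.isBigO_one ℝ
      have h2 := h1.mul (Asymptotics.isBigO_refl (fun i : ℕ => ((i:ℝ)+1) ^ (-(2*r))) atTop)
      refine h2.congr ?_ ?_
      · intro i
        have hi1 : (0:ℝ) < (i:ℝ)+1 := by positivity
        rw [mul_assoc, ← Real.rpow_add hi1, show 2*r + -(2*r) = 0 by ring,
          Real.rpow_zero, mul_one]
      · intro i; rw [one_mul]
    have hsumC : Summable (fun i : ℕ => a (i+1) ^ 2) := summable_of_isBigO_nat hsum0 hBO
    refine ⟨∑' i, a (i+1) ^ 2, fun n => ?_⟩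
    rw [hC n]
    exact hsumC.sum_le_tsum (Finset.range n) (fun i _ => sq_nonneg _)
end
end

section
/- If p − q < 1/2, then S_n / n → 0 almost surely as n → ∞. -/
open MeasureTheory ProbabilityTheory Filter Real
open scoped ENNReal NNReal Topology Classical

noncomputable section

lemma erwd_sum_eq (n : ℕ) (g : ℕ → ℝ) (h : ∀ k, 1 ≤ k → g k = 1 ∨ g k = -1 ∨ g k = 0) :
    ∑ k ∈ Finset.Icc 1 n, g k
      = (((Finset.Icc 1 n).filter (fun k => g k = 1)).card : ℝ)
        - (((Finset.Icc 1 n).filter (fun k => g k = -1)).card : ℝ) := by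
  have h1 : ∀ k ∈ Finset.Icc 1 n, g k
      = (if g k = 1 then (1:ℝ) else 0) - (if g k = -1 then (1:ℝ) else 0) := by
    intro k hk
    rcases h k (Finset.mem_Icc.mp hk).1 with h1 | h1 | h1 <;> rw [h1] <;> norm_num
  rw [Finset.sum_congr rfl h1, Finset.sum_sub_distrib, Finset.sum_boole, Finset.sum_boole]

lemma erwd_meas_le {Ω : Type*} [m0 : MeasurableSpace Ω] (X : ℕ → Ω → ℝ)
    (hX : ∀ n, Measurable (X n)) (n : ℕ) : sigmaUpTo X n ≤ m0 :=
  measurable_iff_comap_le.mp (measurable_pi_lambda _ fun k => hX ((k : ℕ) + 1))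

lemma erwd_meas_sigmaUpTo {Ω : Type*} [MeasurableSpace Ω] (X : ℕ → Ω → ℝ)
    {n k : ℕ} (hk1 : 1 ≤ k) (hkn : k ≤ n) : Measurable[sigmaUpTo X n] (X k) := by
  have hT : Measurable[sigmaUpTo X n] (fun ω (i : Fin n) => X ((i : ℕ) + 1) ω) :=
    measurable_iff_comap_le.mpr le_rfl
  have h2 := (measurable_pi_apply (⟨k - 1, by omega⟩ : Fin n)).comp hT
  have hk : (k - 1) + 1 = k := by omega
  have : ((fun f : Fin n → ℝ => f ⟨k - 1, by omega⟩) ∘ fun ω i => X ((i : ℕ) + 1) ω) = X k := by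
    funext ω; simp [Function.comp, hk]
  rwa [this] at h2

lemma erwd_int_bounded {Ω : Type*} [MeasurableSpace Ω] (P : Measure Ω) [IsProbabilityMeasure P]
    {g : Ω → ℝ} (hg : Measurable g) (C : ℝ) (h : ∀ ω, |g ω| ≤ C) : Integrable g P :=
  (integrable_const C).mono' hg.aestronglyMeasurable
    (ae_of_all _ (by simpa [Real.norm_eq_abs] using h))

lemma erwd_interp (g : ℕ → ℝ) (hb : ∀ k, 1 ≤ k → |g k| ≤ 1)
    (h : Tendsto (fun j : ℕ => (∑ k ∈ Finset.Icc 1 (j ^ 2), g k) / ((j : ℝ) ^ 2)) atTop (𝓝 0)) :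
    Tendsto (fun n : ℕ => (∑ k ∈ Finset.Icc 1 n, g k) / (n : ℝ)) atTop (𝓝 0) := by
  set T : ℕ → ℝ := fun n => ∑ k ∈ Finset.Icc 1 n, g k with hT
  -- difference bound
  have hdiff : ∀ m n : ℕ, m ≤ n → |T n - T m| ≤ (n : ℝ) - m := by
    intro m n hmn
    have hsplit : T m + ∑ k ∈ Finset.Ioc m n, g k = T n := by
      simp only [hT]
      rw [show Finset.Icc 1 m = Finset.Ioc 0 m from rfl,
        show Finset.Icc 1 n = Finset.Ioc 0 n from rfl]
      exact Finset.sum_Ioc_consecutive _ (Nat.zero_le m) hmn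
    have : T n - T m = ∑ k ∈ Finset.Ioc m n, g k := by linarith
    rw [this]
    calc |∑ k ∈ Finset.Ioc m n, g k| ≤ ∑ k ∈ Finset.Ioc m n, |g k| :=
          Finset.abs_sum_le_sum_abs _ _
      _ ≤ ∑ k ∈ Finset.Ioc m n, (1 : ℝ) := by
          refine Finset.sum_le_sum fun k hk => hb k ?_
          have := (Finset.mem_Ioc.mp hk).1; omega
      _ = ((n - m : ℕ) : ℝ) := by simp [Nat.card_Ioc]
      _ = (n : ℝ) - m := by
          have : (m : ℝ) ≤ n := by exact_mod_cast hmn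
          push_cast [Nat.cast_sub hmn]; ring
  set h2 : ℕ → ℝ := fun j => |T (j ^ 2) / ((j : ℝ) ^ 2)| + (2 * j + 1) / ((j : ℝ) ^ 2) with hh2
  have hbound : ∀ n : ℕ, 1 ≤ n → |T n / (n : ℝ)| ≤ h2 (Nat.sqrt n) := by
    intro n hn
    set j := Nat.sqrt n with hj
    have hj1 : 1 ≤ j := by
      rw [hj, Nat.le_sqrt]; omega
    have hjn : j ^ 2 ≤ n := by exact Nat.sqrt_le' n
    have hnj : n < (j + 1) ^ 2 := by exact Nat.lt_succ_sqrt' n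
    have hjR : (1 : ℝ) ≤ (j : ℝ) := by exact_mod_cast hj1
    have hj2pos : (0 : ℝ) < (j : ℝ) ^ 2 := by positivity
    have hnR : (0 : ℝ) < (n : ℝ) := by exact_mod_cast hn
    have hjnR : ((j : ℝ) ^ 2) ≤ (n : ℝ) := by exact_mod_cast hjn
    have hd := hdiff (j ^ 2) n hjn
    have h1 : |T n| ≤ |T (j ^ 2)| + ((n : ℝ) - (j ^ 2 : ℕ)) := by
      have := abs_sub_abs_le_abs_sub (T n) (T (j ^ 2))
      linarith [hd]
    have hgap : (n : ℝ) - ((j : ℕ) ^ 2 : ℕ) ≤ 2 * j + 1 := by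
      have : (n : ℝ) < ((j + 1 : ℕ) : ℝ) ^ 2 := by
        push_cast at hnj ⊢; exact_mod_cast hnj
      push_cast at this ⊢; nlinarith
    rw [abs_div, abs_of_pos hnR]
    rw [hh2]
    have e1 : |T n| / (n : ℝ) ≤ (|T (j ^ 2)| + (2 * j + 1)) / ((j : ℝ) ^ 2) := by
      calc |T n| / (n : ℝ) ≤ (|T (j ^ 2)| + (2 * j + 1)) / (n : ℝ) := by
            gcongr
            push_cast at h1 hgap ⊢; linarith
        _ ≤ (|T (j ^ 2)| + (2 * j + 1)) / ((j : ℝ) ^ 2) := by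
            gcongr
    calc |T n| / (n : ℝ) ≤ (|T (j ^ 2)| + (2 * j + 1)) / ((j : ℝ) ^ 2) := e1
      _ = |T (j ^ 2)| / ((j : ℝ) ^ 2) + (2 * j + 1) / ((j : ℝ) ^ 2) := by ring
      _ = |T (j ^ 2) / ((j : ℝ) ^ 2)| + (2 * j + 1) / ((j : ℝ) ^ 2) := by
          rw [abs_div, abs_of_pos hj2pos]
  have hsqrt : Tendsto Nat.sqrt atTop atTop := by
    apply tendsto_atTop_atTop.mpr
    intro b
    exact ⟨b * b, fun n hn => Nat.le_sqrt.mpr hn⟩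
  have hsecond : Tendsto (fun j : ℕ => (2 * (j : ℝ) + 1) / ((j : ℝ) ^ 2)) atTop (𝓝 0) := by
    apply squeeze_zero' (g := fun j : ℕ => 3 / (j : ℝ))
    · filter_upwards [eventually_ge_atTop 1] with j hj
      positivity
    · filter_upwards [eventually_ge_atTop 1] with j hj
      have hjR : (1 : ℝ) ≤ (j : ℝ) := by exact_mod_cast hj
      rw [div_le_div_iff₀ (by positivity) (by positivity)]
      nlinarith
    · exact tendsto_const_div_atTop_nhds_zero_nat 3
  have hfirst : Tendsto (fun j : ℕ => |T (j ^ 2) / ((j : ℝ) ^ 2)|) atTop (𝓝 0) := by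
    have := h.abs; simpa using this
  have hh2tend : Tendsto h2 atTop (𝓝 0) := by
    have := hfirst.add hsecond; simpa using this
  apply squeeze_zero_norm' (a := fun n => h2 (Nat.sqrt n))
  · filter_upwards [eventually_ge_atTop 1] with n hn
    have := hbound n hn
    rw [abs_div, abs_of_nonneg (by positivity : (0:ℝ) ≤ (n:ℝ))] at this
    simpa [Real.norm_eq_abs, abs_div, abs_of_nonneg (by positivity : (0:ℝ) ≤ (n:ℝ))] using this
  · exact hh2tend.comp hsqrt

set_option maxHeartbeats 1000000 in
/-- for the ERWD with full memory, if `p − q < 1/2` then `Sₙ/n → 0`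
almost surely. -/
theorem erwd_full_memory_slln
    {Ω : Type*} [MeasurableSpace Ω] (P : Measure Ω) [IsProbabilityMeasure P]
    (p q r : ℝ) (hp : 0 < p) (hp1 : p < 1) (hq : 0 < q) (hq1 : q < 1)
    (hr : 0 < r) (hr1 : r < 1) (hpqr : p + q + r = 1)
    (X : ℕ → Ω → ℝ) (hXmeas : ∀ n, Measurable (X n))
    (hXval : ∀ n, 1 ≤ n → ∀ ω, X n ω = 1 ∨ X n ω = -1 ∨ X n ω = 0)
    (hX1p : P {ω | X 1 ω = 1} = ENNReal.ofReal p)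
    (hX1q : P {ω | X 1 ω = -1} = ENNReal.ofReal q)
    (hX1r : P {ω | X 1 ω = 0} = ENNReal.ofReal r)
    (hcondp : ∀ n : ℕ, 1 ≤ n →
      P[Set.indicator {ω | X (n + 1) ω = 1} (fun _ => (1 : ℝ)) | sigmaUpTo X n]
        =ᵐ[P] fun ω =>
          (p * (((Finset.Icc 1 n).filter (fun k => X k ω = 1)).card : ℝ)
            + q * (((Finset.Icc 1 n).filter (fun k => X k ω = -1)).card : ℝ)) / n)
    (hcondq : ∀ n : ℕ, 1 ≤ n →
      P[Set.indicator {ω | X (n + 1) ω = -1} (fun _ => (1 : ℝ)) | sigmaUpTo X n]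
        =ᵐ[P] fun ω =>
          (q * (((Finset.Icc 1 n).filter (fun k => X k ω = 1)).card : ℝ)
            + p * (((Finset.Icc 1 n).filter (fun k => X k ω = -1)).card : ℝ)) / n)
    (hpq : p - q < 1 / 2) :
    ∀ᵐ ω ∂P, Tendsto (fun n : ℕ => (∑ k ∈ Finset.Icc 1 n, X k ω) / n) atTop (𝓝 0) := by
  set a : ℝ := p - q with ha
  set S : ℕ → Ω → ℝ := fun n ω => ∑ k ∈ Finset.Icc 1 n, X k ω with hS
  -- basic bounds
  have hXb : ∀ n, 1 ≤ n → ∀ ω, |X n ω| ≤ 1 := by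
    intro n hn ω
    rcases hXval n hn ω with h | h | h <;> rw [h] <;> norm_num
  have hSb : ∀ n ω, |S n ω| ≤ (n : ℝ) := by
    intro n ω
    calc |S n ω| ≤ ∑ k ∈ Finset.Icc 1 n, |X k ω| := Finset.abs_sum_le_sum_abs _ _
      _ ≤ ∑ k ∈ Finset.Icc 1 n, (1 : ℝ) := by
          refine Finset.sum_le_sum fun k hk => hXb k (Finset.mem_Icc.mp hk).1 ω
      _ = (n : ℝ) := by simp [Nat.card_Icc]
  have hSmeas : ∀ n, Measurable (S n) :=
    fun n => Finset.measurable_sum _ fun k _ => hXmeas k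
  have hSmeasF : ∀ n, Measurable[sigmaUpTo X n] (S n) := by
    intro n
    exact Finset.measurable_sum _ fun k hk =>
      erwd_meas_sigmaUpTo X (Finset.mem_Icc.mp hk).1 (Finset.mem_Icc.mp hk).2
  have hm : ∀ n, sigmaUpTo X n ≤ ‹MeasurableSpace Ω› := erwd_meas_le X hXmeas
  have hintX : ∀ n, 1 ≤ n → Integrable (X n) P :=
    fun n hn => erwd_int_bounded P (hXmeas n) 1 (hXb n hn)
  have hintS2 : ∀ n, Integrable (fun ω => S n ω ^ 2) P := by
    intro n
    refine erwd_int_bounded P ((hSmeas n).pow_const 2) ((n : ℝ) ^ 2) fun ω => ?_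
    rw [abs_pow]
    exact pow_le_pow_left₀ (abs_nonneg _) (hSb n ω) 2
  -- key conditional expectation identity
  have hEX : ∀ n, 1 ≤ n →
      P[X (n + 1) | sigmaUpTo X n] =ᵐ[P] fun ω => a * S n ω / n := by
    intro n hn
    set A : Ω → ℝ := Set.indicator {ω | X (n + 1) ω = 1} (fun _ => (1 : ℝ)) with hA
    set B : Ω → ℝ := Set.indicator {ω | X (n + 1) ω = -1} (fun _ => (1 : ℝ)) with hB
    have hXd : X (n + 1) = A - B := by
      funext ω
      rcases hXval (n + 1) (by omega) ω with h | h | h <;>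
        simp [hA, hB, Set.indicator_apply, h] <;> norm_num
    have hmeasA : Measurable A :=
      measurable_const.indicator (hXmeas (n + 1) (measurableSet_singleton (1 : ℝ)))
    have hmeasB : Measurable B :=
      measurable_const.indicator (hXmeas (n + 1) (measurableSet_singleton (-1 : ℝ)))
    have hbd : ∀ (g : Ω → ℝ), g = A ∨ g = B → ∀ ω, |g ω| ≤ 1 := by
      rintro g (rfl | rfl) ω <;>
      · simp only [hA, hB, Set.indicator_apply]
        split <;> norm_num
    have hintA : Integrable A P := erwd_int_bounded P hmeasA 1 (hbd A (Or.inl rfl))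
    have hintB : Integrable B P := erwd_int_bounded P hmeasB 1 (hbd B (Or.inr rfl))
    have hsub := condExp_sub (m := sigmaUpTo X n) (μ := P) hintA hintB
    rw [hXd]
    refine hsub.trans ?_
    have h1 := hcondp n hn
    have h2 := hcondq n hn
    rw [← hA] at h1
    rw [← hB] at h2
    filter_upwards [h1, h2] with ω hω1 hω2
    simp only [Pi.sub_apply, hω1, hω2]
    have hsum := erwd_sum_eq n (fun k => X k ω) (fun k hk => hXval k hk ω)
    have hSeq : S n ω = (((Finset.Icc 1 n).filter (fun k => X k ω = 1)).card : ℝ)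
        - (((Finset.Icc 1 n).filter (fun k => X k ω = -1)).card : ℝ) := hsum
    rw [hSeq, ha]
    ring
  -- cross term
  have hcross : ∀ n, 1 ≤ n →
      ∫ ω, S n ω * X (n + 1) ω ∂P = a / n * ∫ ω, S n ω ^ 2 ∂P := by
    intro n hn
    have hintSX : Integrable (fun ω => S n ω * X (n + 1) ω) P := by
      refine erwd_int_bounded P ((hSmeas n).mul (hXmeas (n + 1))) n fun ω => ?_
      rw [abs_mul]
      calc |S n ω| * |X (n + 1) ω| ≤ (n : ℝ) * 1 :=
            mul_le_mul (hSb n ω) (hXb (n + 1) (by omega) ω) (abs_nonneg _) (Nat.cast_nonneg n)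
        _ = (n : ℝ) := mul_one _
    have hpull := condExp_mul_of_stronglyMeasurable_left (μ := P) (m := sigmaUpTo X n)
      (Measurable.stronglyMeasurable (hSmeasF n)) hintSX (hintX (n + 1) (by omega))
    have h2 : (fun ω => S n ω * (P[X (n + 1) | sigmaUpTo X n]) ω)
        =ᵐ[P] fun ω => a / n * S n ω ^ 2 := by
      filter_upwards [hEX n hn] with ω hω
      rw [hω]
      ring
    calc ∫ ω, S n ω * X (n + 1) ω ∂P
        = ∫ ω, (P[fun ω => S n ω * X (n + 1) ω | sigmaUpTo X n]) ω ∂P :=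
          (integral_condExp (hm n)).symm
      _ = ∫ ω, a / n * S n ω ^ 2 ∂P := by
          refine integral_congr_ae (EventuallyEq.trans ?_ h2)
          exact hpull
      _ = a / n * ∫ ω, S n ω ^ 2 ∂P := integral_const_mul _ _
  -- second moment recursion and bound
  set C : ℝ := max (1 / (1 - 2 * a)) 1 with hC
  have hC1 : 1 ≤ C := le_max_right _ _
  have hCa : 2 * a * C + 1 ≤ C := by
    have h2a : 0 < 1 - 2 * a := by rw [ha]; linarith
    have : 1 / (1 - 2 * a) ≤ C := le_max_left _ _
    rw [div_le_iff₀ h2a] at this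
    nlinarith
  have hintX2 : ∀ n, 1 ≤ n → Integrable (fun ω => X n ω ^ 2) P := by
    intro n hn
    refine erwd_int_bounded P ((hXmeas n).pow_const 2) 1 fun ω => ?_
    rw [abs_pow]
    calc |X n ω| ^ 2 ≤ 1 ^ 2 := pow_le_pow_left₀ (abs_nonneg _) (hXb n hn ω) 2
      _ = 1 := one_pow 2
  have hIX01 : ∀ n, 1 ≤ n → ∫ ω, X n ω ^ 2 ∂P ≤ 1 := by
    intro n hn
    calc ∫ ω, X n ω ^ 2 ∂P ≤ ∫ _ω, (1 : ℝ) ∂P := by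
          refine integral_mono (hintX2 n hn) (integrable_const 1) fun ω => ?_
          calc X n ω ^ 2 = |X n ω| ^ 2 := (sq_abs _).symm
            _ ≤ 1 ^ 2 := pow_le_pow_left₀ (abs_nonneg _) (hXb n hn ω) 2
            _ = 1 := one_pow 2
      _ = 1 := by simp
  have hrec : ∀ n, 1 ≤ n → ∫ ω, S (n + 1) ω ^ 2 ∂P
      = (1 + 2 * a / n) * ∫ ω, S n ω ^ 2 ∂P + ∫ ω, X (n + 1) ω ^ 2 ∂P := by
    intro n hn
    have hintSX : Integrable (fun ω => 2 * (S n ω * X (n + 1) ω)) P := by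
      refine Integrable.const_mul ?_ 2
      refine erwd_int_bounded P ((hSmeas n).mul (hXmeas (n + 1))) n fun ω => ?_
      rw [abs_mul]
      calc |S n ω| * |X (n + 1) ω| ≤ (n : ℝ) * 1 :=
            mul_le_mul (hSb n ω) (hXb (n + 1) (by omega) ω) (abs_nonneg _) (Nat.cast_nonneg n)
        _ = (n : ℝ) := mul_one _
    have hptw : (fun ω => S (n + 1) ω ^ 2)
        = fun ω => (S n ω ^ 2 + 2 * (S n ω * X (n + 1) ω)) + X (n + 1) ω ^ 2 := by
      funext ω
      have hSsucc : S (n + 1) ω = S n ω + X (n + 1) ω := by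
        simp only [hS]
        exact Finset.sum_Icc_succ_top (by omega) _
      rw [hSsucc]; ring
    have hint12 : Integrable (fun ω => S n ω ^ 2 + 2 * (S n ω * X (n + 1) ω)) P :=
      (hintS2 n).add hintSX
    rw [hptw, integral_add hint12 (hintX2 (n + 1) (by omega)),
      integral_add (hintS2 n) hintSX, integral_const_mul, hcross n hn]
    ring
  have hmom : ∀ n, 1 ≤ n → ∫ ω, S n ω ^ 2 ∂P ≤ C * n := by
    intro n hn
    induction n, hn using Nat.le_induction with
    | base =>
      have h1 : (fun ω => S 1 ω ^ 2) = fun ω => X 1 ω ^ 2 := by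
        funext ω; simp [hS]
      rw [h1]
      have := hIX01 1 le_rfl
      push_cast
      linarith [hC1]
    | succ n hn IH =>
      have hnR : (1 : ℝ) ≤ (n : ℝ) := by exact_mod_cast hn
      have hfn : 0 ≤ ∫ ω, S n ω ^ 2 ∂P := integral_nonneg fun ω => sq_nonneg _
      have hIX : ∫ ω, X (n + 1) ω ^ 2 ∂P ≤ 1 := hIX01 (n + 1) (by omega)
      rw [hrec n hn]
      rcases le_or_gt 0 (1 + 2 * a / (n : ℝ)) with hpos | hneg
      · have h1 : (1 + 2 * a / n) * ∫ ω, S n ω ^ 2 ∂P ≤ (1 + 2 * a / n) * (C * n) :=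
          mul_le_mul_of_nonneg_left IH hpos
        have hn0 : (n : ℝ) ≠ 0 := by linarith
        have h2 : (1 + 2 * a / n) * (C * n) = C * n + 2 * a * C := by
          field_simp
        have h3 : C * n + 2 * a * C + 1 ≤ C * (n + 1) := by nlinarith [hCa]
        push_cast
        nlinarith
      · have h1 : (1 + 2 * a / n) * ∫ ω, S n ω ^ 2 ∂P ≤ 0 :=
          mul_nonpos_of_nonpos_of_nonneg hneg.le hfn
        have h2 : (0 : ℝ) ≤ C * n := by nlinarith [hC1]
        push_cast
        nlinarith
  -- Chebyshev + Borel-Cantelli along squares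
  have hcheb : ∀ ε : ℝ, 0 < ε → ∀ j : ℕ, 1 ≤ j →
      P {ω | ε ≤ |S (j ^ 2) ω| / ((j : ℝ) ^ 2)}
        ≤ ENNReal.ofReal (C / ε ^ 2 * (1 / (j : ℝ) ^ 2)) := by
    intro ε hε j hj
    have hjR : (1 : ℝ) ≤ (j : ℝ) := by exact_mod_cast hj
    have hj2 : (0 : ℝ) < (j : ℝ) ^ 2 := by positivity
    set t : ℝ := ε ^ 2 * ((j : ℝ) ^ 2) ^ 2 with ht
    have htpos : 0 < t := by positivity
    have hsub : {ω | ε ≤ |S (j ^ 2) ω| / ((j : ℝ) ^ 2)} ⊆ {ω | t ≤ S (j ^ 2) ω ^ 2} := by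
      intro ω hω
      simp only [Set.mem_setOf_eq] at hω ⊢
      have h1 : ε * (j : ℝ) ^ 2 ≤ |S (j ^ 2) ω| := (le_div_iff₀ hj2).mp hω
      calc t = (ε * (j : ℝ) ^ 2) ^ 2 := by ring
        _ ≤ |S (j ^ 2) ω| ^ 2 := pow_le_pow_left₀ (by positivity) h1 2
        _ = S (j ^ 2) ω ^ 2 := sq_abs _
    have hmarkov := mul_meas_ge_le_integral_of_nonneg (μ := P)
      (ae_of_all _ fun ω => sq_nonneg (S (j ^ 2) ω)) (hintS2 (j ^ 2)) t
    have hmomj : ∫ ω, S (j ^ 2) ω ^ 2 ∂P ≤ C * ((j : ℝ) ^ 2) := by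
      have h1 : 1 ≤ j ^ 2 := Nat.one_le_iff_ne_zero.mpr (by positivity)
      have := hmom (j ^ 2) h1
      push_cast at this ⊢
      linarith
    have htR : (P {ω | t ≤ S (j ^ 2) ω ^ 2}).toReal ≤ C / ε ^ 2 * (1 / (j : ℝ) ^ 2) := by
      have h2 : (P {ω | t ≤ S (j ^ 2) ω ^ 2}).toReal ≤ (C * ((j : ℝ) ^ 2)) / t := by
        rw [le_div_iff₀ htpos]
        calc (P {ω | t ≤ S (j ^ 2) ω ^ 2}).toReal * t
            = t * (P {ω | t ≤ S (j ^ 2) ω ^ 2}).toReal := mul_comm _ _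
          _ ≤ ∫ ω, S (j ^ 2) ω ^ 2 ∂P := hmarkov
          _ ≤ C * ((j : ℝ) ^ 2) := hmomj
      calc (P {ω | t ≤ S (j ^ 2) ω ^ 2}).toReal ≤ (C * ((j : ℝ) ^ 2)) / t := h2
        _ = C / ε ^ 2 * (1 / (j : ℝ) ^ 2) := by
            rw [ht]; field_simp
    calc P {ω | ε ≤ |S (j ^ 2) ω| / ((j : ℝ) ^ 2)} ≤ P {ω | t ≤ S (j ^ 2) ω ^ 2} :=
          measure_mono hsub
      _ ≤ ENNReal.ofReal (C / ε ^ 2 * (1 / (j : ℝ) ^ 2)) := by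
          rw [← ENNReal.ofReal_toReal (measure_ne_top P _)]
          exact ENNReal.ofReal_le_ofReal htR
  have hBC1 : ∀ m : ℕ, ∀ᵐ ω ∂P, ∀ᶠ j in atTop,
      |S (j ^ 2) ω| / ((j : ℝ) ^ 2) < 1 / ((m : ℝ) + 1) := by
    intro m
    set ε : ℝ := 1 / ((m : ℝ) + 1) with hε
    have hεpos : 0 < ε := by positivity
    have hCnn : 0 ≤ C := le_trans zero_le_one hC1
    have hsumR : Summable (fun j : ℕ => C / ε ^ 2 * (1 / (j : ℝ) ^ 2)) :=
      (summable_one_div_nat_pow.mpr one_lt_two).mul_left _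
    have hsum : (∑' j : ℕ, P {ω | ε ≤ |S (j ^ 2) ω| / ((j : ℝ) ^ 2)}) ≠ ⊤ := by
      refine LT.lt.ne ?_
      have hle : ∀ j : ℕ, P {ω | ε ≤ |S (j ^ 2) ω| / ((j : ℝ) ^ 2)}
          ≤ ENNReal.ofReal (C / ε ^ 2 * (1 / (j : ℝ) ^ 2)) := by
        intro j
        rcases Nat.eq_zero_or_pos j with rfl | hj
        · have hempty : {ω | ε ≤ |S ((0 : ℕ) ^ 2) ω| / (((0 : ℕ) : ℝ) ^ 2)} = ∅ := by
            ext ω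
            simp only [Set.mem_setOf_eq, Set.mem_empty_iff_false, iff_false, not_le]
            norm_num
            exact hεpos
          rw [hempty]
          simp
        · exact hcheb ε hεpos j hj
      calc (∑' j : ℕ, P {ω | ε ≤ |S (j ^ 2) ω| / ((j : ℝ) ^ 2)})
          ≤ ∑' j : ℕ, ENNReal.ofReal (C / ε ^ 2 * (1 / (j : ℝ) ^ 2)) := ENNReal.tsum_le_tsum hle
        _ = ENNReal.ofReal (∑' j : ℕ, C / ε ^ 2 * (1 / (j : ℝ) ^ 2)) :=
            (ENNReal.ofReal_tsum_of_nonneg (fun j => by positivity) hsumR).symm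
        _ < ⊤ := ENNReal.ofReal_lt_top
    filter_upwards [MeasureTheory.ae_eventually_notMem hsum] with ω hω
    filter_upwards [hω] with j hj
    simpa only [Set.mem_setOf_eq, not_le] using hj
  have hBC : ∀ᵐ ω ∂P, Tendsto (fun j : ℕ => S (j ^ 2) ω / ((j : ℝ) ^ 2)) atTop (𝓝 0) := by
    filter_upwards [ae_all_iff.mpr hBC1] with ω hω
    rw [NormedAddCommGroup.tendsto_nhds_zero]
    intro ε hε
    obtain ⟨m, hm⟩ := exists_nat_one_div_lt hε
    filter_upwards [hω m] with j hj
    rw [Real.norm_eq_abs, abs_div, abs_of_nonneg (by positivity : (0 : ℝ) ≤ (j : ℝ) ^ 2)]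
    exact lt_trans hj hm
  filter_upwards [hBC] with ω hω
  exact erwd_interp (fun k => X k ω) (fun k hk => hXb k hk ω) hω
end
end

section
/- S_n / n → (p − q)·sign(X_1) almost surely as n → ∞, where sign(1) = 1, sign(−1) = −1 and sign(0) = 0. -/
open MeasureTheory ProbabilityTheory Filter Real
open scoped ENNReal NNReal Topology Classical

noncomputable section

section Aux

variable {Ω : Type*} [MeasurableSpace Ω]

lemma sigmaUpTo_le (X : ℕ → Ω → ℝ) (hX : ∀ n, Measurable (X n)) (n : ℕ) :
    sigmaUpTo X n ≤ ‹MeasurableSpace Ω› :=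
  Measurable.comap_le (measurable_pi_lambda _ fun k => hX _)

lemma measurableSet_eq_sigmaUpTo (X : ℕ → Ω → ℝ) {n i : ℕ} (hi1 : 1 ≤ i) (hin : i ≤ n)
    (a : ℝ) : MeasurableSet[sigmaUpTo X n] {ω | X i ω = a} := by
  have hlt : i - 1 < n := by omega
  refine ⟨(fun v : Fin n → ℝ => v ⟨i - 1, hlt⟩) ⁻¹' {a},
    (measurable_pi_apply _) (measurableSet_singleton a), ?_⟩
  ext ω
  simp [Nat.sub_add_cancel hi1]

lemma preimage_decomp (f : Ω → ℝ) (hf : ∀ ω, f ω = 1 ∨ f ω = -1 ∨ f ω = 0)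
    (s : Set ℝ) (B : Set Ω) :
    f ⁻¹' s ∩ B = ⋃ a ∈ ({1, -1, 0} : Finset ℝ).filter (· ∈ s), ({ω | f ω = a} ∩ B) := by
  ext ω
  simp only [Set.mem_inter_iff, Set.mem_preimage, Set.mem_iUnion, Finset.mem_filter,
    Finset.mem_insert, Finset.mem_singleton, Set.mem_setOf_eq, exists_prop]
  constructor
  · rintro ⟨hs, hB⟩
    exact ⟨f ω, ⟨by rcases hf ω with h | h | h <;> simp [h], hs⟩, rfl, hB⟩
  · rintro ⟨a, ⟨_, has⟩, hfa, hB⟩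
    exact ⟨by rwa [hfa], hB⟩

lemma measure_preimage_decomp (μ : Measure Ω) (f : Ω → ℝ) (hmf : Measurable f)
    (hf : ∀ ω, f ω = 1 ∨ f ω = -1 ∨ f ω = 0) (s : Set ℝ) (B : Set Ω) (hB : MeasurableSet B) :
    μ (f ⁻¹' s ∩ B) = ∑ a ∈ ({1, -1, 0} : Finset ℝ).filter (· ∈ s), μ ({ω | f ω = a} ∩ B) := by
  rw [preimage_decomp f hf s B]
  rw [measure_biUnion_finset ?_ ?_]
  · intro a _ b _ hab
    refine Set.disjoint_left.2 ?_
    rintro ω ⟨ha, -⟩ ⟨hb, -⟩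
    exact hab (ha ▸ hb ▸ rfl)
  · intro a _
    exact ((hmf (measurableSet_singleton a)).inter hB)

lemma tendsto_shift {u : ℕ → ℝ} {x L : ℝ}
    (h : Tendsto (fun n : ℕ => u n / n) atTop (𝓝 L)) :
    Tendsto (fun n : ℕ => (x + u (n - 1)) / n) atTop (𝓝 L) := by
  have h1 : Tendsto (fun n : ℕ => x / n) atTop (𝓝 0) :=
    tendsto_const_div_atTop_nhds_zero_nat x
  have h2 : Tendsto (fun n : ℕ => u (n - 1) / ((n - 1 : ℕ) : ℝ)) atTop (𝓝 L) :=
    h.comp (tendsto_sub_atTop_nat 1)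
  have h3 : Tendsto (fun n : ℕ => ((n - 1 : ℕ) : ℝ) / (n : ℝ)) atTop (𝓝 1) := by
    have : Tendsto (fun n : ℕ => 1 - 1 / (n : ℝ)) atTop (𝓝 1) := by
      simpa using tendsto_const_nhds.sub (tendsto_const_div_atTop_nhds_zero_nat (1 : ℝ))
    refine this.congr' ?_
    filter_upwards [eventually_ge_atTop 1] with n hn
    have hn0 : (n : ℝ) ≠ 0 := by positivity
    rw [Nat.cast_sub hn, Nat.cast_one]
    field_simp
  have hmain := h1.add (h2.mul h3)
  rw [zero_add, mul_one] at hmain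
  refine hmain.congr' ?_
  filter_upwards [eventually_ge_atTop 2] with n hn
  have hn0 : (n : ℝ) ≠ 0 := by positivity
  have hm0 : ((n - 1 : ℕ) : ℝ) ≠ 0 := by
    have : 1 ≤ n - 1 := by omega
    positivity
  rw [div_mul_div_comm, mul_comm (u (n - 1)) (((n - 1 : ℕ) : ℝ)),
    mul_div_mul_left _ _ hm0, add_div]

end Aux

section MainAux

variable {Ω : Type*} [MeasurableSpace Ω]

set_option maxHeartbeats 1000000 in
lemma main_aux (P : Measure Ω) [IsProbabilityMeasure P]
    (X : ℕ → Ω → ℝ) (hXmeas : ∀ n, Measurable (X n))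
    (hXval : ∀ n, 1 ≤ n → ∀ ω, X n ω = 1 ∨ X n ω = -1 ∨ X n ω = 0)
    (c : ℝ) (th : ℝ → ℝ) (hth : ∀ b, 0 ≤ th b)
    (hstep : ∀ n, 1 ≤ n → ∀ A : Set Ω, MeasurableSet[sigmaUpTo X n] A →
      A ⊆ {ω | X 1 ω = c} → ∀ b : ℝ, b = 1 ∨ b = -1 ∨ b = 0 →
      P (A ∩ {ω | X (n + 1) ω = b}) = ENNReal.ofReal (th b) * P A)
    (S : ℕ → Ω → ℝ) (hS : ∀ n ω, S n ω = ∑ k ∈ Finset.Icc 1 n, X k ω) :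
    ∀ᵐ ω ∂P, X 1 ω = c →
      Tendsto (fun n : ℕ => S n ω / n) atTop (𝓝 (th 1 - th (-1))) := by
  classical
  set T : Set Ω := {ω | X 1 ω = c} with hT
  have hTmeas : MeasurableSet T := (hXmeas 1) (measurableSet_singleton c)
  have hBmeas : ∀ i (a : ℝ), MeasurableSet {ω | X i ω = a} :=
    fun i a => (hXmeas i) (measurableSet_singleton a)
  by_cases hκ0 : P T = 0
  · have : ∀ᵐ ω ∂P, ω ∉ T := by
      rw [ae_iff]
      simpa using hκ0
    filter_upwards [this] with ω hω hc
    exact absurd hc hω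
  have hκtop : P T ≠ ⊤ := measure_ne_top P T
  set Q : Measure Ω := (P T)⁻¹ • P.restrict T with hQ
  have hQs : ∀ s : Set Ω, MeasurableSet s → Q s = (P T)⁻¹ * P (s ∩ T) := by
    intro s hs
    rw [hQ, Measure.smul_apply, Measure.restrict_apply hs, smul_eq_mul]
  have hQprob : IsProbabilityMeasure Q := by
    constructor
    rw [hQs Set.univ MeasurableSet.univ, Set.univ_inter]
    exact ENNReal.inv_mul_cancel hκ0 hκtop
  -- T is measurable in every sigmaUpTo X n for n ≥ 1
  have hTin : ∀ n, 1 ≤ n → MeasurableSet[sigmaUpTo X n] T :=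
    fun n hn => measurableSet_eq_sigmaUpTo X le_rfl hn c
  -- single atom probabilities under Q
  have hQatom : ∀ i, 2 ≤ i → ∀ b : ℝ, b = 1 ∨ b = -1 ∨ b = 0 →
      Q {ω | X i ω = b} = ENNReal.ofReal (th b) := by
    intro i hi b hb
    have h1 : P (T ∩ {ω | X i ω = b}) = ENNReal.ofReal (th b) * P T := by
      have := hstep (i - 1) (by omega) T (hTin (i - 1) (by omega)) subset_rfl b hb
      rwa [Nat.sub_add_cancel (by omega : 1 ≤ i)] at this
    rw [hQs _ (hBmeas i b), Set.inter_comm, h1, mul_comm ((P T)⁻¹),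
      mul_assoc, ENNReal.mul_inv_cancel hκ0 hκtop, mul_one]
  -- pair atom probabilities under Q
  have hQatom2 : ∀ i j, 2 ≤ i → i < j → ∀ a b : ℝ,
      (a = 1 ∨ a = -1 ∨ a = 0) → (b = 1 ∨ b = -1 ∨ b = 0) →
      Q ({ω | X i ω = a} ∩ {ω | X j ω = b})
        = ENNReal.ofReal (th a) * ENNReal.ofReal (th b) := by
    intro i j hi hij a b ha hb
    have hAin : MeasurableSet[sigmaUpTo X (j - 1)] (T ∩ {ω | X i ω = a}) :=
      (hTin (j - 1) (by omega)).inter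
        (measurableSet_eq_sigmaUpTo X (by omega) (by omega) a)
    have h2 : P (T ∩ {ω | X i ω = a} ∩ {ω | X j ω = b})
        = ENNReal.ofReal (th b) * P (T ∩ {ω | X i ω = a}) := by
      have := hstep (j - 1) (by omega) (T ∩ {ω | X i ω = a}) hAin
        Set.inter_subset_left b hb
      rwa [Nat.sub_add_cancel (by omega : 1 ≤ j)] at this
    have h1 : P (T ∩ {ω | X i ω = a}) = ENNReal.ofReal (th a) * P T := by
      have := hstep (i - 1) (by omega) T (hTin (i - 1) (by omega)) subset_rfl a ha
      rwa [Nat.sub_add_cancel (by omega : 1 ≤ i)] at this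
    rw [hQs _ ((hBmeas i a).inter (hBmeas j b))]
    have hset : {ω | X i ω = a} ∩ {ω | X j ω = b} ∩ T
        = T ∩ {ω | X i ω = a} ∩ {ω | X j ω = b} := by
      ext ω; simp only [Set.mem_inter_iff]; tauto
    rw [hset, h2, h1]
    calc (P T)⁻¹ * (ENNReal.ofReal (th b) * (ENNReal.ofReal (th a) * P T))
        = ENNReal.ofReal (th a) * ENNReal.ofReal (th b) * ((P T)⁻¹ * P T) := by ring
      _ = ENNReal.ofReal (th a) * ENNReal.ofReal (th b) := by
          rw [ENNReal.inv_mul_cancel hκ0 hκtop, mul_one]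
  -- the shifted sequence
  set Y : ℕ → Ω → ℝ := fun i => X (i + 2) with hY
  have hYval : ∀ i ω, Y i ω = 1 ∨ Y i ω = -1 ∨ Y i ω = 0 :=
    fun i ω => hXval (i + 2) (by omega) ω
  have hYatom : ∀ i (b : ℝ), b = 1 ∨ b = -1 ∨ b = 0 →
      Q {ω | Y i ω = b} = ENNReal.ofReal (th b) :=
    fun i b hb => hQatom (i + 2) (by omega) b hb
  -- preimage measure formula
  have hQpre : ∀ i (s : Set ℝ), Q (Y i ⁻¹' s)
      = ∑ a ∈ ({1, -1, 0} : Finset ℝ).filter (· ∈ s), ENNReal.ofReal (th a) := by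
    intro i s
    have := measure_preimage_decomp Q (Y i) (hXmeas (i + 2)) (hYval i) s Set.univ
      MeasurableSet.univ
    rw [Set.inter_univ] at this
    rw [this]
    refine Finset.sum_congr rfl fun a ha => ?_
    rw [Set.inter_univ]
    refine hYatom i a ?_
    have := Finset.mem_filter.1 ha
    simpa using this.1
  -- integrability
  have hYint : Integrable (Y 0) Q := by
    refine (integrable_const (1 : ℝ)).mono' (hXmeas 2).aestronglyMeasurable ?_
    refine ae_of_all _ fun ω => ?_
    rw [Real.norm_eq_abs]
    rcases hYval 0 ω with h | h | h <;> rw [h] <;> norm_num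
  haveI := hQprob
  -- pairwise independence
  have hYindep : Pairwise (Function.onFun (IndepFun · · Q) Y) := by
    have key : ∀ i j : ℕ, i < j → IndepFun (Y i) (Y j) Q := by
      intro i j hij
      rw [indepFun_iff_measure_inter_preimage_eq_mul]
      intro s t hs ht
      have hBm : MeasurableSet (Y j ⁻¹' t) := (hXmeas (j + 2)) ht
      have hinter : Q (Y i ⁻¹' s ∩ Y j ⁻¹' t)
          = ∑ a ∈ ({1, -1, 0} : Finset ℝ).filter (· ∈ s),
              ∑ b ∈ ({1, -1, 0} : Finset ℝ).filter (· ∈ t),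
                ENNReal.ofReal (th a) * ENNReal.ofReal (th b) := by
        rw [measure_preimage_decomp Q (Y i) (hXmeas (i + 2)) (hYval i) s _ hBm]
        refine Finset.sum_congr rfl fun a ha => ?_
        have ha' : a = 1 ∨ a = -1 ∨ a = 0 := by
          simpa using (Finset.mem_filter.1 ha).1
        rw [Set.inter_comm, measure_preimage_decomp Q (Y j) (hXmeas (j + 2)) (hYval j) t
          {ω | Y i ω = a} ((hXmeas (i + 2)) (measurableSet_singleton a))]
        refine Finset.sum_congr rfl fun b hb => ?_
        have hb' : b = 1 ∨ b = -1 ∨ b = 0 := by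
          simpa using (Finset.mem_filter.1 hb).1
        rw [Set.inter_comm]
        exact hQatom2 (i + 2) (j + 2) (by omega) (by omega) a b ha' hb'
      rw [hinter, hQpre, hQpre, Finset.sum_mul_sum]
    intro i j hij
    rcases lt_or_gt_of_ne hij with h | h
    · exact key i j h
    · exact (key j i h).symm
  -- identical distribution
  have hYident : ∀ i, IdentDistrib (Y i) (Y 0) Q Q := by
    intro i
    refine ⟨(hXmeas (i + 2)).aemeasurable, (hXmeas 2).aemeasurable, ?_⟩
    refine Measure.ext fun s hs => ?_
    rw [Measure.map_apply (hXmeas (i + 2)) hs, Measure.map_apply (hXmeas 2) hs,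
      hQpre i s, hQpre 0 s]
  -- expectation
  have hExp : ∫ ω, Y 0 ω ∂Q = th 1 - th (-1) := by
    have hfun : (Y 0) = fun ω =>
        Set.indicator {ω | Y 0 ω = 1} (fun _ => (1 : ℝ)) ω
          - Set.indicator {ω | Y 0 ω = -1} (fun _ => (1 : ℝ)) ω := by
      funext ω
      rcases hYval 0 ω with h | h | h <;>
        simp [Set.indicator_apply, h] <;> norm_num
    rw [hfun, integral_sub ((integrable_const (1 : ℝ)).indicator (hBmeas 2 1))
      ((integrable_const (1 : ℝ)).indicator (hBmeas 2 (-1))),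
      integral_indicator_const (1 : ℝ) (hBmeas 2 1),
      integral_indicator_const (1 : ℝ) (hBmeas 2 (-1)),
      measureReal_def, measureReal_def,
      hQatom 2 (by omega) 1 (by norm_num), hQatom 2 (by omega) (-1) (by norm_num),
      ENNReal.toReal_ofReal (hth 1), ENNReal.toReal_ofReal (hth (-1)),
      smul_eq_mul, smul_eq_mul, mul_one, mul_one]
  -- strong law of large numbers
  have hslln := strong_law_ae_real (μ := Q) Y hYint hYindep hYident
  rw [hExp] at hslln
  -- transfer back to P
  have hres : ∀ᵐ ω ∂(P.restrict T),
      Tendsto (fun n : ℕ => (∑ i ∈ Finset.range n, Y i ω) / n) atTop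
        (𝓝 (th 1 - th (-1))) := by
    have hc : (P T)⁻¹ ≠ 0 := ENNReal.inv_ne_zero.2 hκtop
    rw [← Measure.ae_ennreal_smul_measure_iff hc]
    exact hslln
  have hres2 := ae_imp_of_ae_restrict hres
  filter_upwards [hres2] with ω hω hc1
  have hu : Tendsto (fun n : ℕ => (∑ i ∈ Finset.range n, Y i ω) / n) atTop
      (𝓝 (th 1 - th (-1))) := hω hc1
  have hsum : ∀ m : ℕ, S (m + 1) ω = X 1 ω + ∑ i ∈ Finset.range m, Y i ω := by
    intro m
    induction m with
    | zero => simp [hS]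
    | succ k ih =>
      rw [hS, Finset.sum_Icc_succ_top (by omega : 1 ≤ k + 1 + 1), ← hS, ih,
        Finset.sum_range_succ]
      have : Y k ω = X (k + 1 + 1) ω := rfl
      rw [← this]
      ring
  have heq : (fun n : ℕ => (X 1 ω + ∑ i ∈ Finset.range (n - 1), Y i ω) / n)
      =ᶠ[atTop] (fun n : ℕ => S n ω / n) := by
    filter_upwards [eventually_ge_atTop 1] with n hn
    have h := hsum (n - 1)
    rw [Nat.sub_add_cancel hn] at h
    rw [h]
  exact Tendsto.congr' heq (tendsto_shift hu)

end MainAux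


set_option maxHeartbeats 1600000 in
/-- for the ERWD remembering only the first step,
`Sₙ/n → (p − q)·sign(X₁)` almost surely. -/
theorem erwd_first_step_memory_slln
    {Ω : Type*} [MeasurableSpace Ω] (P : Measure Ω) [IsProbabilityMeasure P]
    (p q r : ℝ) (hp : 0 < p) (hp1 : p < 1) (hq : 0 < q) (hq1 : q < 1)
    (hr : 0 < r) (hr1 : r < 1) (hpqr : p + q + r = 1)
    (X : ℕ → Ω → ℝ) (hXmeas : ∀ n, Measurable (X n))
    (hXval : ∀ n, 1 ≤ n → ∀ ω, X n ω = 1 ∨ X n ω = -1 ∨ X n ω = 0)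
    (hX1p : P {ω | X 1 ω = 1} = ENNReal.ofReal p)
    (hX1q : P {ω | X 1 ω = -1} = ENNReal.ofReal q)
    (hX1r : P {ω | X 1 ω = 0} = ENNReal.ofReal r)
    (hcondp : ∀ n : ℕ, 1 ≤ n →
      P[Set.indicator {ω | X (n + 1) ω = 1} (fun _ => (1 : ℝ)) | sigmaUpTo X n]
        =ᵐ[P] fun ω =>
          p * (if X 1 ω = 1 then (1 : ℝ) else 0) + q * (if X 1 ω = -1 then (1 : ℝ) else 0))
    (hcondq : ∀ n : ℕ, 1 ≤ n →
      P[Set.indicator {ω | X (n + 1) ω = -1} (fun _ => (1 : ℝ)) | sigmaUpTo X n]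
        =ᵐ[P] fun ω =>
          q * (if X 1 ω = 1 then (1 : ℝ) else 0) + p * (if X 1 ω = -1 then (1 : ℝ) else 0))
    (S : ℕ → Ω → ℝ) (hS : ∀ n ω, S n ω = ∑ k ∈ Finset.Icc 1 n, X k ω)
    :
    ∀ᵐ ω ∂P,
      Tendsto (fun n : ℕ => S n ω / n) atTop (𝓝 ((p - q) * Real.sign (X 1 ω))) := by
  classical
  have hm := sigmaUpTo_le X hXmeas
  have hBmeas : ∀ i (a : ℝ), MeasurableSet {ω | X i ω = a} :=
    fun i a => (hXmeas i) (measurableSet_singleton a)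
  have hindint : ∀ B : Set Ω, MeasurableSet B →
      Integrable (Set.indicator B (fun _ => (1 : ℝ))) P :=
    fun B hB => (integrable_const 1).indicator hB
  have intInd : ∀ A B : Set Ω, MeasurableSet A → MeasurableSet B →
      ∫ ω in A, Set.indicator B (fun _ => (1 : ℝ)) ω ∂P = (P (A ∩ B)).toReal := by
    intro A B hA hB
    rw [setIntegral_indicator hB, setIntegral_const, smul_eq_mul, mul_one, measureReal_def]
  -- the basic conditional-expectation identity on sets
  have keyInt : ∀ (α β b : ℝ) (n : ℕ), 1 ≤ n →
      (P[Set.indicator {ω | X (n + 1) ω = b} (fun _ => (1 : ℝ)) | sigmaUpTo X n]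
        =ᵐ[P] fun ω =>
          α * (if X 1 ω = 1 then (1 : ℝ) else 0) + β * (if X 1 ω = -1 then (1 : ℝ) else 0)) →
      ∀ A : Set Ω, MeasurableSet[sigmaUpTo X n] A →
      (P (A ∩ {ω | X (n + 1) ω = b})).toReal
        = α * (P (A ∩ {ω | X 1 ω = 1})).toReal
          + β * (P (A ∩ {ω | X 1 ω = -1})).toReal := by
    intro α β b n hn hcond A hA
    have hAmeas : MeasurableSet A := hm n _ hA
    have h1 := setIntegral_condExp (hm n) (hindint _ (hBmeas (n + 1) b)) hA
    have h2 : ∫ ω in A,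
        (P[Set.indicator {ω | X (n + 1) ω = b} (fun _ => (1 : ℝ)) | sigmaUpTo X n]) ω ∂P
        = ∫ ω in A, (α * (if X 1 ω = 1 then (1 : ℝ) else 0)
            + β * (if X 1 ω = -1 then (1 : ℝ) else 0)) ∂P :=
      integral_congr_ae (ae_restrict_of_ae hcond)
    have h3 : ∀ ω, α * (if X 1 ω = 1 then (1 : ℝ) else 0)
          + β * (if X 1 ω = -1 then (1 : ℝ) else 0)
        = α * Set.indicator {ω | X 1 ω = 1} (fun _ => (1 : ℝ)) ω
          + β * Set.indicator {ω | X 1 ω = -1} (fun _ => (1 : ℝ)) ω := by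
      intro ω
      simp [Set.indicator_apply, Set.mem_setOf_eq]
    have h4 : ∫ ω in A, (α * (if X 1 ω = 1 then (1 : ℝ) else 0)
          + β * (if X 1 ω = -1 then (1 : ℝ) else 0)) ∂P
        = α * (P (A ∩ {ω | X 1 ω = 1})).toReal
          + β * (P (A ∩ {ω | X 1 ω = -1})).toReal := by
      simp_rw [h3]
      rw [integral_add (((hindint _ (hBmeas 1 1)).restrict).const_mul α)
        (((hindint _ (hBmeas 1 (-1))).restrict).const_mul β),
        integral_const_mul, integral_const_mul,
        intInd A _ hAmeas (hBmeas 1 1), intInd A _ hAmeas (hBmeas 1 (-1))]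
    rw [← intInd A _ hAmeas (hBmeas (n + 1) b), ← h1, h2, h4]
  -- lifting toReal identities to ENNReal
  have lift : ∀ (s A : Set Ω) (t : ℝ), 0 ≤ t →
      (P s).toReal = t * (P A).toReal → P s = ENNReal.ofReal t * P A := by
    intro s A t ht h
    rw [← ENNReal.ofReal_toReal (measure_ne_top P s), h, ENNReal.ofReal_mul ht,
      ENNReal.ofReal_toReal (measure_ne_top P A)]
  -- the splitting of a set along the three values of X i
  have hsplit : ∀ A : Set Ω, MeasurableSet A → ∀ i, 1 ≤ i →
      (P A).toReal = (P (A ∩ {ω | X i ω = 1})).toReal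
        + (P (A ∩ {ω | X i ω = -1})).toReal + (P (A ∩ {ω | X i ω = 0})).toReal := by
    intro A hA i hi
    have hu : A = (A ∩ {ω | X i ω = 1}) ∪ (A ∩ {ω | X i ω = -1}) ∪ (A ∩ {ω | X i ω = 0}) := by
      ext ω
      simp only [Set.mem_union, Set.mem_inter_iff, Set.mem_setOf_eq]
      constructor
      · intro h
        rcases hXval i hi ω with h1 | h1 | h1 <;> tauto
      · tauto
    have hd1 : Disjoint ((A ∩ {ω | X i ω = 1}) ∪ (A ∩ {ω | X i ω = -1}))
        (A ∩ {ω | X i ω = 0}) := by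
      refine Set.disjoint_left.2 ?_
      rintro ω (⟨-, h1⟩ | ⟨-, h1⟩) ⟨-, h2⟩ <;>
        · rw [Set.mem_setOf_eq] at h1 h2
          rw [h2] at h1
          norm_num at h1
    have hd2 : Disjoint (A ∩ {ω | X i ω = 1}) (A ∩ {ω | X i ω = -1}) := by
      refine Set.disjoint_left.2 ?_
      rintro ω ⟨-, h1⟩ ⟨-, h2⟩
      rw [Set.mem_setOf_eq] at h1 h2
      rw [h2] at h1
      norm_num at h1
    have := congrArg (fun s => P s) hu
    rw [measure_union hd1 (hA.inter (hBmeas i 0)),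
      measure_union hd2 (hA.inter (hBmeas i (-1)))] at this
    rw [this, ENNReal.toReal_add (by finiteness) (by finiteness),
      ENNReal.toReal_add (by finiteness) (by finiteness)]
  -- step law on the event {X 1 = 1}
  have hstep1 : ∀ n, 1 ≤ n → ∀ A : Set Ω, MeasurableSet[sigmaUpTo X n] A →
      A ⊆ {ω | X 1 ω = 1} → ∀ b : ℝ, b = 1 ∨ b = -1 ∨ b = 0 →
      P (A ∩ {ω | X (n + 1) ω = b})
        = ENNReal.ofReal (if b = 1 then p else if b = -1 then q else r) * P A := by
    intro n hn A hA hsub b hb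
    have hAmeas : MeasurableSet A := hm n _ hA
    have hA1 : A ∩ {ω | X 1 ω = 1} = A := Set.inter_eq_left.2 hsub
    have hA2 : A ∩ {ω | X 1 ω = -1} = ∅ := by
      rw [Set.eq_empty_iff_forall_notMem]
      rintro ω ⟨h1', h2'⟩
      have h3' := hsub h1'
      rw [Set.mem_setOf_eq] at h2' h3'
      rw [h3'] at h2'
      norm_num at h2'
    have e1 := keyInt p q 1 n hn (hcondp n hn) A hA
    have e2 := keyInt q p (-1) n hn (hcondq n hn) A hA
    rw [hA1, hA2, measure_empty] at e1 e2
    simp only [ENNReal.toReal_zero, mul_zero, add_zero] at e1 e2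
    rcases hb with hb | hb | hb
    · subst hb
      rw [if_pos rfl]
      exact lift _ _ p hp.le e1
    · subst hb
      norm_num
      exact lift _ _ q hq.le e2
    · subst hb
      norm_num
      refine lift _ _ r hr.le ?_
      have hsp := hsplit A hAmeas (n + 1) (by omega)
      rw [e1, e2] at hsp
      have hr' : r = 1 - p - q := by linarith
      rw [hr']
      linarith
  -- step law on the event {X 1 = -1}
  have hstepm : ∀ n, 1 ≤ n → ∀ A : Set Ω, MeasurableSet[sigmaUpTo X n] A →
      A ⊆ {ω | X 1 ω = -1} → ∀ b : ℝ, b = 1 ∨ b = -1 ∨ b = 0 →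
      P (A ∩ {ω | X (n + 1) ω = b})
        = ENNReal.ofReal (if b = 1 then q else if b = -1 then p else r) * P A := by
    intro n hn A hA hsub b hb
    have hAmeas : MeasurableSet A := hm n _ hA
    have hA1 : A ∩ {ω | X 1 ω = -1} = A := Set.inter_eq_left.2 hsub
    have hA2 : A ∩ {ω | X 1 ω = 1} = ∅ := by
      rw [Set.eq_empty_iff_forall_notMem]
      rintro ω ⟨h1', h2'⟩
      have h3' := hsub h1'
      rw [Set.mem_setOf_eq] at h2' h3'
      rw [h3'] at h2'
      norm_num at h2'
    have e1 := keyInt p q 1 n hn (hcondp n hn) A hA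
    have e2 := keyInt q p (-1) n hn (hcondq n hn) A hA
    rw [hA1, hA2, measure_empty] at e1 e2
    simp only [ENNReal.toReal_zero, mul_zero, zero_add] at e1 e2
    rcases hb with hb | hb | hb
    · subst hb
      rw [if_pos rfl]
      exact lift _ _ q hq.le e1
    · subst hb
      norm_num
      exact lift _ _ p hp.le e2
    · subst hb
      norm_num
      refine lift _ _ r hr.le ?_
      have hsp := hsplit A hAmeas (n + 1) (by omega)
      rw [e1, e2] at hsp
      have hr' : r = 1 - p - q := by linarith
      rw [hr']
      linarith
  -- SLLN on {X 1 = 1} and {X 1 = -1}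
  have hcase1 := main_aux P X hXmeas hXval 1
    (fun b => if b = 1 then p else if b = -1 then q else r)
    (fun b => by
      show (0 : ℝ) ≤ if b = 1 then p else if b = -1 then q else r
      split_ifs <;> linarith) hstep1 S hS
  have hcasem := main_aux P X hXmeas hXval (-1)
    (fun b => if b = 1 then q else if b = -1 then p else r)
    (fun b => by
      show (0 : ℝ) ≤ if b = 1 then q else if b = -1 then p else r
      split_ifs <;> linarith) hstepm S hS
  norm_num at hcase1 hcasem
  -- the event {X 1 = 0}: all later steps vanish a.s.
  have hT0in : ∀ n, 1 ≤ n → MeasurableSet[sigmaUpTo X n] {ω | X 1 ω = 0} :=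
    fun n hn => measurableSet_eq_sigmaUpTo X le_rfl hn 0
  have hzero : ∀ i : ℕ, 2 ≤ i →
      P {ω | X 1 ω = 0 ∧ (X i ω = 1 ∨ X i ω = -1)} = 0 := by
    intro i hi
    have hempty1 : {ω | X 1 ω = 0} ∩ {ω | X 1 ω = 1} = ∅ := by
      rw [Set.eq_empty_iff_forall_notMem]
      rintro ω ⟨h1, h2⟩
      rw [Set.mem_setOf_eq] at h1 h2
      rw [h1] at h2
      norm_num at h2
    have hempty2 : {ω | X 1 ω = 0} ∩ {ω | X 1 ω = -1} = ∅ := by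
      rw [Set.eq_empty_iff_forall_notMem]
      rintro ω ⟨h1, h2⟩
      rw [Set.mem_setOf_eq] at h1 h2
      rw [h1] at h2
      norm_num at h2
    have e1 := keyInt p q 1 (i - 1) (by omega) (hcondp (i - 1) (by omega))
      {ω | X 1 ω = 0} (hT0in (i - 1) (by omega))
    have e2 := keyInt q p (-1) (i - 1) (by omega) (hcondq (i - 1) (by omega))
      {ω | X 1 ω = 0} (hT0in (i - 1) (by omega))
    rw [Nat.sub_add_cancel (by omega : 1 ≤ i), hempty1, hempty2, measure_empty] at e1 e2
    simp only [ENNReal.toReal_zero, mul_zero, add_zero, zero_add] at e1 e2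
    have hz1 : P ({ω | X 1 ω = 0} ∩ {ω | X i ω = 1}) = 0 := by
      have := measure_ne_top P ({ω | X 1 ω = 0} ∩ {ω | X i ω = 1})
      rcases (ENNReal.toReal_eq_zero_iff _).1 e1 with h | h
      · exact h
      · exact absurd h this
    have hz2 : P ({ω | X 1 ω = 0} ∩ {ω | X i ω = -1}) = 0 := by
      have := measure_ne_top P ({ω | X 1 ω = 0} ∩ {ω | X i ω = -1})
      rcases (ENNReal.toReal_eq_zero_iff _).1 e2 with h | h
      · exact h
      · exact absurd h this
    have hsub : {ω | X 1 ω = 0 ∧ (X i ω = 1 ∨ X i ω = -1)}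
        ⊆ ({ω | X 1 ω = 0} ∩ {ω | X i ω = 1}) ∪ ({ω | X 1 ω = 0} ∩ {ω | X i ω = -1}) := by
      rintro ω ⟨h1, h2 | h2⟩
      · exact Or.inl ⟨h1, h2⟩
      · exact Or.inr ⟨h1, h2⟩
    exact measure_mono_null hsub (by rw [measure_union_null_iff.2 ⟨hz1, hz2⟩] )
  have hae0 : ∀ᵐ ω ∂P, X 1 ω = 0 →
      Tendsto (fun n : ℕ => S n ω / n) atTop (𝓝 0) := by
    have hmain : ∀ᵐ ω ∂P, ∀ i : ℕ, 2 ≤ i → X 1 ω = 0 → X i ω = 0 := by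
      rw [ae_all_iff]
      intro i
      rw [ae_iff]
      by_cases hi : 2 ≤ i
      · refine measure_mono_null ?_ (hzero i hi)
        intro ω hω
        simp only [Set.mem_setOf_eq] at hω ⊢
        push_neg at hω
        obtain ⟨-, h1, h2⟩ := hω
        refine ⟨h1, ?_⟩
        rcases hXval i (by omega) ω with h | h | h
        · exact Or.inl h
        · exact Or.inr h
        · exact absurd h h2
      · have : {a | ¬(2 ≤ i → X 1 a = 0 → X i a = 0)} = ∅ := by
          rw [Set.eq_empty_iff_forall_notMem]
          intro ω hω
          rw [Set.mem_setOf_eq] at hω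
          push_neg at hω
          exact hi hω.1
        rw [this, measure_empty]
    filter_upwards [hmain] with ω hω h0
    have hSz : ∀ n : ℕ, S n ω = 0 := by
      intro n
      rw [hS]
      refine Finset.sum_eq_zero fun k hk => ?_
      rw [Finset.mem_Icc] at hk
      rcases Nat.eq_or_lt_of_le hk.1 with h | h
      · rw [← h]
        exact h0
      · exact hω k (by omega) h0
    simp only [hSz, zero_div]
    exact tendsto_const_nhds
  -- assembly
  filter_upwards [hcase1, hcasem, hae0] with ω h1 h2 h0
  rcases hXval 1 le_rfl ω with h | h | h
  · rw [h, Real.sign_one, mul_one]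
    exact h1 h
  · rw [h, Real.sign_of_neg (by norm_num : (-1 : ℝ) < 0)]
    have := h2 h
    convert this using 2
    ring
  · rw [h, Real.sign_zero, mul_zero]
    exact h0 h
end
end

section
/- S_n / n converges in distribution, as n → ∞, to the five-point law p²·δ_{p−q} + pr·δ_{(p−q)/2} + (pq + q² + r)·δ_0 + qr·δ_{−(p−q)/2} + pq·δ_{−(p−q)}. Moreover E(S_n/n) → ((p−q)²/2)·(1 + p − q) and Var(S_n/n) → ((p−q)²/4)·((p+q)(1 + 3p − q) − (p−q)²·(1 + (p−q))²) as n → ∞. -/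
open MeasureTheory ProbabilityTheory Filter Real
open scoped ENNReal NNReal Topology Classical

noncomputable section

/-- Cauchy–Schwarz light: on a probability space, `∫|g| ≤ √(∫ g²)` for bounded `g`. -/
lemma intAbsLeSqrt {Ω : Type*} [MeasurableSpace Ω] (P : Measure Ω) [IsProbabilityMeasure P]
    {g : Ω → ℝ} (hg : AEStronglyMeasurable g P) {C : ℝ} (hb : ∀ ω, |g ω| ≤ C) :
    ∫ ω, |g ω| ∂P ≤ Real.sqrt (∫ ω, (g ω)^2 ∂P) := by
  rw [Real.le_sqrt (integral_nonneg fun ω => abs_nonneg _)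
    (integral_nonneg fun ω => sq_nonneg _)]
  have hmem : MemLp (fun ω => |g ω|) 2 P :=
    MemLp.of_bound hg.norm C (Filter.Eventually.of_forall fun ω => by
      simpa [Real.norm_eq_abs, abs_abs] using hb ω)
  have hv := variance_nonneg (fun ω => |g ω|) P
  rw [variance_eq_sub hmem] at hv
  have h2 : (P[(fun ω => |g ω|) ^ 2]) = ∫ ω, (g ω)^2 ∂P := by
    apply integral_congr_ae; filter_upwards with ω; simp [sq_abs]
  rw [h2] at hv
  linarith

set_option maxHeartbeats 1600000 in
/-- for the ERWD remembering only the first two steps, `Sₙ/n` converges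
in distribution to the five-point law
`p²·δ_{p−q} + pr·δ_{(p−q)/2} + (pq+q²+r)·δ₀ + qr·δ_{−(p−q)/2} + pq·δ_{−(p−q)}`,
together with convergence of the mean and the variance of `Sₙ/n`. -/
theorem erwd_first_two_steps_memory_weak_limit
    {Ω : Type*} [MeasurableSpace Ω] (P : Measure Ω) [IsProbabilityMeasure P]
    (p q r : ℝ) (hp : 0 < p) (hp1 : p < 1) (hq : 0 < q) (hq1 : q < 1)
    (hr : 0 < r) (hr1 : r < 1) (hpqr : p + q + r = 1)
    (X : ℕ → Ω → ℝ) (hXmeas : ∀ n, Measurable (X n))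
    (hXval : ∀ n, 1 ≤ n → ∀ ω, X n ω = 1 ∨ X n ω = -1 ∨ X n ω = 0)
    (hX1p : P {ω | X 1 ω = 1} = ENNReal.ofReal p)
    (hX1q : P {ω | X 1 ω = -1} = ENNReal.ofReal q)
    (hX1r : P {ω | X 1 ω = 0} = ENNReal.ofReal r)
    (hX2p : P[Set.indicator {ω | X 2 ω = 1} (fun _ => (1 : ℝ)) | sigmaUpTo X 1]
      =ᵐ[P] fun ω =>
        p * (if X 1 ω = 1 then (1 : ℝ) else 0) + q * (if X 1 ω = -1 then (1 : ℝ) else 0))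
    (hX2q : P[Set.indicator {ω | X 2 ω = -1} (fun _ => (1 : ℝ)) | sigmaUpTo X 1]
      =ᵐ[P] fun ω =>
        q * (if X 1 ω = 1 then (1 : ℝ) else 0) + p * (if X 1 ω = -1 then (1 : ℝ) else 0))
    (hcondp : ∀ n : ℕ, 2 ≤ n →
      P[Set.indicator {ω | X (n + 1) ω = 1} (fun _ => (1 : ℝ)) | sigmaUpTo X n]
        =ᵐ[P] fun ω =>
          (p * ((if X 1 ω = 1 then (1 : ℝ) else 0) + (if X 2 ω = 1 then (1 : ℝ) else 0))
            + q * ((if X 1 ω = -1 then (1 : ℝ) else 0)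
              + (if X 2 ω = -1 then (1 : ℝ) else 0))) / 2)
    (hcondq : ∀ n : ℕ, 2 ≤ n →
      P[Set.indicator {ω | X (n + 1) ω = -1} (fun _ => (1 : ℝ)) | sigmaUpTo X n]
        =ᵐ[P] fun ω =>
          (q * ((if X 1 ω = 1 then (1 : ℝ) else 0) + (if X 2 ω = 1 then (1 : ℝ) else 0))
            + p * ((if X 1 ω = -1 then (1 : ℝ) else 0)
              + (if X 2 ω = -1 then (1 : ℝ) else 0))) / 2)
    (S : ℕ → Ω → ℝ) (hS : ∀ n ω, S n ω = ∑ k ∈ Finset.Icc 1 n, X k ω)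
    :
    TendstoInDist (fun n : ℕ => Measure.map (fun ω => S n ω / n) P)
      (ENNReal.ofReal (p ^ 2) • Measure.dirac (p - q)
        + ENNReal.ofReal (p * r) • Measure.dirac ((p - q) / 2)
        + ENNReal.ofReal (p * q + q ^ 2 + r) • Measure.dirac 0
        + ENNReal.ofReal (q * r) • Measure.dirac (-((p - q) / 2))
        + ENNReal.ofReal (p * q) • Measure.dirac (-(p - q))) ∧
    Tendsto (fun n : ℕ => ∫ ω, S n ω / n ∂P) atTop
      (𝓝 ((p - q) ^ 2 / 2 * (1 + p - q))) ∧
    Tendsto (fun n : ℕ => variance (fun ω => S n ω / n) P) atTop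
      (𝓝 ((p - q) ^ 2 / 4 *
        ((p + q) * (1 + 3 * p - q) - (p - q) ^ 2 * (1 + (p - q)) ^ 2))) := by
  classical
  have hrr : r = 1 - p - q := by linarith
  -- the limit random variable
  set Y : Ω → ℝ := fun ω => (p - q) * (X 1 ω + X 2 ω) / 2 with hYdef
  have hYapp : ∀ ω, Y ω = (p - q) * (X 1 ω + X 2 ω) / 2 := fun _ => rfl
  -- σ-algebras
  have hFle : ∀ n : ℕ, sigmaUpTo X n ≤ (inferInstance : MeasurableSpace Ω) := by
    rintro n s ⟨t, ht, rfl⟩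
    exact (measurable_pi_lambda _ fun k => hXmeas _) ht
  have hXFmeas : ∀ n k : ℕ, 1 ≤ k → k ≤ n → Measurable[sigmaUpTo X n] (X k) := by
    intro n k hk1 hkn
    have h1 : Measurable[sigmaUpTo X n] (fun ω (j : Fin n) => X ((j : ℕ) + 1) ω) :=
      measurable_iff_comap_le.mpr le_rfl
    have heqf : (fun f : Fin n → ℝ => f ⟨k - 1, by omega⟩)
        ∘ (fun ω (j : Fin n) => X ((j : ℕ) + 1) ω) = X k := by
      funext ω
      show X (k - 1 + 1) ω = X k ω
      rw [show k - 1 + 1 = k by omega]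
    rw [← heqf]
    exact (measurable_pi_apply _).comp h1
  -- measurability
  have hYm : Measurable Y := (((hXmeas 1).add (hXmeas 2)).const_mul (p - q)).div_const 2
  have hYFm : ∀ n, 2 ≤ n → Measurable[sigmaUpTo X n] Y := fun n hn =>
    (((hXFmeas n 1 le_rfl (by omega)).add (hXFmeas n 2 (by omega) hn)).const_mul
      (p - q)).div_const 2
  -- bounds
  have hbX : ∀ k, 1 ≤ k → ∀ ω, |X k ω| ≤ 1 := by
    intro k hk ω; rcases hXval k hk ω with h | h | h <;> simp [h]
  have hbY : ∀ ω, |Y ω| ≤ 1 := by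
    intro ω
    have h1 := hbX 1 le_rfl ω; have h2 := hbX 2 (by norm_num) ω
    have habs : |X 1 ω + X 2 ω| ≤ 2 := (abs_add_le _ _).trans (by linarith)
    have heq : |Y ω| = |p - q| * |X 1 ω + X 2 ω| / 2 := by
      rw [hYapp, abs_div, abs_mul]; norm_num
    have hpq1 : |p - q| ≤ 1 := by rw [abs_le]; constructor <;> linarith
    rw [heq]
    nlinarith [abs_nonneg (p - q), abs_nonneg (X 1 ω + X 2 ω)]
  have habs2 : ∀ a b : ℝ, |a| ≤ 1 → |b| ≤ 1 → |a - b| ≤ 2 := by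
    intro a b ha hb
    rw [sub_eq_add_neg]
    refine (abs_add_le _ _).trans ?_
    rw [abs_neg]; linarith
  have hsqle : ∀ u B : ℝ, |u| ≤ B → u ^ 2 ≤ B ^ 2 := by
    intro u B h
    nlinarith [sq_abs u, abs_nonneg u]
  have hDbound : ∀ i : ℕ, 1 ≤ i → ∀ ω, |X i ω - Y ω| ≤ 2 :=
    fun i hi ω => habs2 _ _ (hbX i hi ω) (hbY ω)
  -- integrability helper
  have hIntOfB : ∀ (g : Ω → ℝ) (C : ℝ), Measurable g → (∀ ω, |g ω| ≤ C) → Integrable g P :=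
    fun g C hg hb => (integrable_const C).mono' hg.aestronglyMeasurable
      (Filter.Eventually.of_forall fun ω => by simpa [Real.norm_eq_abs] using hb ω)
  have hIntY : Integrable Y P := hIntOfB Y 1 hYm hbY
  have hIntX : ∀ k, 1 ≤ k → Integrable (X k) P := fun k hk => hIntOfB _ 1 (hXmeas k) (hbX k hk)
  have hmeasEq : ∀ (k : ℕ) (c : ℝ), MeasurableSet {ω | X k ω = c} :=
    fun k c => hXmeas k (measurableSet_singleton c)
  have hIntInd : ∀ (k : ℕ) (c : ℝ),
      Integrable (Set.indicator {ω | X k ω = c} (fun _ => (1 : ℝ))) P :=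
    fun k c => (integrable_const 1).indicator (hmeasEq k c)
  have hIntD2 : ∀ j k : ℕ, 1 ≤ j → 1 ≤ k →
      Integrable (fun ω => (X j ω - Y ω) * (X k ω - Y ω)) P := by
    intro j k hj hk
    refine hIntOfB _ 4 (((hXmeas j).sub hYm).mul ((hXmeas k).sub hYm)) fun ω => ?_
    rw [abs_mul]
    nlinarith [hDbound j hj ω, hDbound k hk ω, abs_nonneg (X j ω - Y ω),
      abs_nonneg (X k ω - Y ω)]
  -- decomposition of X into indicators
  have hXdec : ∀ k, 1 ≤ k → X k = (fun ω => Set.indicator {ω' | X k ω' = 1} (fun _ => (1 : ℝ)) ω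
      - Set.indicator {ω' | X k ω' = -1} (fun _ => (1 : ℝ)) ω) := by
    intro k hk; funext ω
    rcases hXval k hk ω with h | h | h <;>
      norm_num [Set.indicator_apply, Set.mem_setOf_eq, h]
  -- conditional expectation of the next step
  have hcondX : ∀ k, 2 ≤ k → P[X (k + 1) | sigmaUpTo X k] =ᵐ[P] Y := by
    intro k hk
    have hsub : P[X (k + 1) | sigmaUpTo X k] =ᵐ[P]
        P[Set.indicator {ω | X (k + 1) ω = 1} (fun _ => (1 : ℝ)) | sigmaUpTo X k]
          - P[Set.indicator {ω | X (k + 1) ω = -1} (fun _ => (1 : ℝ)) | sigmaUpTo X k] := by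
      conv_lhs => rw [hXdec (k + 1) (by omega)]
      exact condExp_sub (hIntInd _ _) (hIntInd _ _) _
    refine hsub.trans ?_
    filter_upwards [hcondp k hk, hcondq k hk] with ω h1 h2
    simp only [Pi.sub_apply]
    rw [h1, h2, hYapp ω]
    rcases hXval 1 le_rfl ω with h1' | h1' | h1' <;>
      rcases hXval 2 (by norm_num) ω with h2' | h2' | h2' <;>
      norm_num [h1', h2'] <;> ring
  -- martingale-difference property
  have hcondD : ∀ k, 2 ≤ k →
      P[(fun ω => X (k + 1) ω - Y ω) | sigmaUpTo X k] =ᵐ[P] (fun _ => (0 : ℝ)) := by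
    intro k hk
    have h1 : P[(fun ω => X (k + 1) ω - Y ω) | sigmaUpTo X k] =ᵐ[P]
        P[X (k + 1) | sigmaUpTo X k] - P[Y | sigmaUpTo X k] :=
      condExp_sub (hIntX (k + 1) (by omega)) hIntY _
    have h2 : P[Y | sigmaUpTo X k] = Y :=
      condExp_of_stronglyMeasurable (hFle k) ((hYFm k hk).stronglyMeasurable) hIntY
    filter_upwards [h1, hcondX k hk] with ω hω1 hω2
    rw [hω1, Pi.sub_apply, h2, hω2, sub_self]
  -- orthogonality of the differences
  have horth : ∀ j k : ℕ, 3 ≤ j → j < k →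
      ∫ ω, (X j ω - Y ω) * (X k ω - Y ω) ∂P = 0 := by
    intro j k hj hjk
    have hk2 : 2 ≤ k - 1 := by omega
    have hDjm : StronglyMeasurable[sigmaUpTo X (k - 1)] (fun ω => X j ω - Y ω) :=
      ((hXFmeas (k - 1) j (by omega) (by omega)).sub (hYFm (k - 1) hk2)).stronglyMeasurable
    have hIntDk : Integrable (fun ω => X k ω - Y ω) P :=
      hIntOfB _ 2 ((hXmeas k).sub hYm) (hDbound k (by omega))
    have hpull := condExp_mul_of_stronglyMeasurable_left (m := sigmaUpTo X (k - 1)) (μ := P)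
      hDjm (hIntD2 j k (by omega) (by omega)) hIntDk
    have hDk0 : P[(fun ω => X k ω - Y ω) | sigmaUpTo X (k - 1)] =ᵐ[P] (fun _ => (0 : ℝ)) := by
      have h := hcondD (k - 1) hk2
      rwa [show k - 1 + 1 = k by omega] at h
    have hzero : P[(fun ω => X j ω - Y ω) * (fun ω => X k ω - Y ω) | sigmaUpTo X (k - 1)]
        =ᵐ[P] (fun _ => (0 : ℝ)) := by
      filter_upwards [hpull, hDk0] with ω hω1 hω2
      rw [hω1, Pi.mul_apply, hω2, mul_zero]
    calc ∫ ω, (X j ω - Y ω) * (X k ω - Y ω) ∂P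
        = ∫ ω, (P[(fun ω => X j ω - Y ω) * (fun ω => X k ω - Y ω) | sigmaUpTo X (k - 1)]) ω ∂P :=
          (integral_condExp (hFle (k - 1))).symm
      _ = ∫ _ω, (0 : ℝ) ∂P := integral_congr_ae hzero
      _ = 0 := by simp
  -- second moment of the martingale sum
  have hsum : ∀ n : ℕ, 2 ≤ n →
      ∫ ω, (∑ k ∈ Finset.Icc 3 n, (X k ω - Y ω))^2 ∂P ≤ 4 * n := by
    intro n hn
    have hptwise : ∀ ω, (∑ k ∈ Finset.Icc 3 n, (X k ω - Y ω))^2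
        = ∑ j ∈ Finset.Icc 3 n, ∑ k ∈ Finset.Icc 3 n, (X j ω - Y ω) * (X k ω - Y ω) := by
      intro ω; rw [sq, Finset.sum_mul_sum]
    rw [integral_congr_ae (Filter.Eventually.of_forall hptwise)]
    rw [integral_finset_sum _ (fun j hj => integrable_finset_sum _ (fun k hk =>
      hIntD2 j k (by have := Finset.mem_Icc.mp hj; omega)
        (by have := Finset.mem_Icc.mp hk; omega)))]
    have hrow : ∀ j ∈ Finset.Icc 3 n,
        (∫ ω, ∑ k ∈ Finset.Icc 3 n, (X j ω - Y ω) * (X k ω - Y ω) ∂P) ≤ 4 := by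
      intro j hj
      have hj3 : 3 ≤ j := (Finset.mem_Icc.mp hj).1
      rw [integral_finset_sum _ (fun k hk =>
        hIntD2 j k (by omega) (by have := Finset.mem_Icc.mp hk; omega))]
      rw [Finset.sum_eq_single j]
      · have hb4 : ∀ ω, (X j ω - Y ω) * (X j ω - Y ω) ≤ 4 := by
          intro ω
          have h := hDbound j (by omega) ω
          nlinarith [neg_abs_le (X j ω - Y ω), le_abs_self (X j ω - Y ω)]
        calc ∫ ω, (X j ω - Y ω) * (X j ω - Y ω) ∂P
            ≤ ∫ _ω, (4 : ℝ) ∂P :=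
              integral_mono (hIntD2 j j (by omega) (by omega)) (integrable_const 4) hb4
          _ = 4 := by simp
      · intro k hk hkj
        have hk3 : 3 ≤ k := (Finset.mem_Icc.mp hk).1
        rcases lt_or_gt_of_ne hkj with h | h
        · rw [integral_congr_ae (Filter.Eventually.of_forall
            (fun ω => mul_comm (X j ω - Y ω) (X k ω - Y ω)))]
          exact horth k j hk3 h
        · exact horth j k hj3 h
      · intro hjn; exact absurd hj hjn
    calc (∑ j ∈ Finset.Icc 3 n, ∫ ω, ∑ k ∈ Finset.Icc 3 n,
            (X j ω - Y ω) * (X k ω - Y ω) ∂P)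
        ≤ ∑ _j ∈ Finset.Icc 3 n, (4 : ℝ) := Finset.sum_le_sum hrow
      _ = 4 * (Finset.Icc 3 n).card := by rw [Finset.sum_const, nsmul_eq_mul]; ring
      _ ≤ 4 * n := by
          have hcard : ((Finset.Icc 3 n).card : ℝ) ≤ (n : ℝ) := by
            rw [Nat.card_Icc]; exact_mod_cast (by omega : n + 1 - 3 ≤ n)
          linarith
  -- decomposition of S n
  have hSof : ∀ n, 2 ≤ n → ∀ ω, S n ω = X 1 ω + X 2 ω + ∑ k ∈ Finset.Icc 3 n, X k ω := by
    intro n hn ω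
    rw [hS]
    have hins : Finset.Icc 1 n = insert 1 (insert 2 (Finset.Icc 3 n)) := by
      ext x; simp only [Finset.mem_Icc, Finset.mem_insert]; omega
    rw [hins, Finset.sum_insert (by simp only [Finset.mem_insert, Finset.mem_Icc]; omega),
      Finset.sum_insert (by simp only [Finset.mem_Icc]; omega)]
    ring
  have hTdec : ∀ n, 2 ≤ n → ∀ ω, S n ω / n - Y ω
      = (X 1 ω + X 2 ω - 2 * Y ω + ∑ k ∈ Finset.Icc 3 n, (X k ω - Y ω)) / n := by
    intro n hn ω
    have hne : (n : ℝ) ≠ 0 := Nat.cast_ne_zero.mpr (by omega)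
    have hsum2 : ∑ k ∈ Finset.Icc 3 n, (X k ω - Y ω)
        = (∑ k ∈ Finset.Icc 3 n, X k ω) - ((n : ℝ) - 2) * Y ω := by
      rw [Finset.sum_sub_distrib, Finset.sum_const, nsmul_eq_mul, Nat.card_Icc]
      have hc : ((n + 1 - 3 : ℕ) : ℝ) = (n : ℝ) - 2 := by
        rw [Nat.cast_sub (by omega)]; push_cast; ring
      rw [hc]
    rw [hSof n hn ω, hsum2]
    field_simp
    ring
  -- main L² bound
  have hmain : ∀ n : ℕ, 2 ≤ n → ∫ ω, (S n ω / n - Y ω)^2 ∂P ≤ 24 / n := by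
    intro n hn
    have hnpos : (0 : ℝ) < n := by exact_mod_cast (by omega : 0 < n)
    have hn2 : (2 : ℝ) ≤ n := by exact_mod_cast hn
    have hbm : Measurable (fun ω => ∑ k ∈ Finset.Icc 3 n, (X k ω - Y ω)) :=
      Finset.measurable_sum _ fun k _ => (hXmeas k).sub hYm
    have ham : Measurable (fun ω => X 1 ω + X 2 ω - 2 * Y ω) :=
      ((hXmeas 1).add (hXmeas 2)).sub (hYm.const_mul 2)
    have hba : ∀ ω, |X 1 ω + X 2 ω - 2 * Y ω| ≤ 4 := by
      intro ω
      have h1 := hbX 1 le_rfl ω; have h2 := hbX 2 (by norm_num) ω; have h3 := hbY ω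
      rw [abs_le] at h1 h2 h3 ⊢
      constructor <;> [linarith [h1.1, h2.1, h3.2]; linarith [h1.2, h2.2, h3.1]]
    have hbb : ∀ ω, |∑ k ∈ Finset.Icc 3 n, (X k ω - Y ω)| ≤ 2 * n := by
      intro ω
      refine (Finset.abs_sum_le_sum_abs _ _).trans ?_
      calc ∑ k ∈ Finset.Icc 3 n, |X k ω - Y ω| ≤ ∑ _k ∈ Finset.Icc 3 n, (2 : ℝ) :=
            Finset.sum_le_sum fun k hk => hDbound k (by have := Finset.mem_Icc.mp hk; omega) ω
        _ = 2 * (Finset.Icc 3 n).card := by rw [Finset.sum_const, nsmul_eq_mul]; ring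
        _ ≤ 2 * n := by
            have hcard : ((Finset.Icc 3 n).card : ℝ) ≤ (n : ℝ) := by
              rw [Nat.card_Icc]; exact_mod_cast (by omega : n + 1 - 3 ≤ n)
            linarith
    have hIa : Integrable (fun ω => (X 1 ω + X 2 ω - 2 * Y ω) ^ 2) P := by
      refine hIntOfB _ 16 (ham.pow_const 2) fun ω => ?_
      rw [abs_of_nonneg (sq_nonneg _)]
      have := hsqle _ 4 (hba ω); norm_num at this ⊢; linarith
    have hIb : Integrable (fun ω => (∑ k ∈ Finset.Icc 3 n, (X k ω - Y ω)) ^ 2) P := by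
      refine hIntOfB _ ((2 * (n : ℝ)) ^ 2) (hbm.pow_const 2) fun ω => ?_
      rw [abs_of_nonneg (sq_nonneg _)]
      exact hsqle _ _ (hbb ω)
    have hIab : Integrable (fun ω =>
        (X 1 ω + X 2 ω - 2 * Y ω + ∑ k ∈ Finset.Icc 3 n, (X k ω - Y ω)) ^ 2) P := by
      refine hIntOfB _ ((4 + 2 * (n : ℝ)) ^ 2) ((ham.add hbm).pow_const 2) fun ω => ?_
      rw [abs_of_nonneg (sq_nonneg _)]
      refine hsqle _ _ ?_
      refine (abs_add_le _ _).trans ?_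
      linarith [hba ω, hbb ω]
    have heq : (fun ω => (S n ω / n - Y ω)^2)
        = fun ω => ((n : ℝ)⁻¹)^2 *
            (X 1 ω + X 2 ω - 2 * Y ω + ∑ k ∈ Finset.Icc 3 n, (X k ω - Y ω))^2 := by
      funext ω; rw [hTdec n hn ω, div_pow]; ring
    have hrw : ∫ ω, (S n ω / n - Y ω)^2 ∂P
        = ((n : ℝ)⁻¹)^2 * ∫ ω, (X 1 ω + X 2 ω - 2 * Y ω
            + ∑ k ∈ Finset.Icc 3 n, (X k ω - Y ω))^2 ∂P := by
      rw [heq]; exact integral_const_mul _ _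
    rw [hrw]
    have hintle : ∫ ω, (X 1 ω + X 2 ω - 2 * Y ω
        + ∑ k ∈ Finset.Icc 3 n, (X k ω - Y ω))^2 ∂P ≤ 32 + 8 * (n : ℝ) := by
      have hmono : ∫ ω, (X 1 ω + X 2 ω - 2 * Y ω
          + ∑ k ∈ Finset.Icc 3 n, (X k ω - Y ω))^2 ∂P
          ≤ ∫ ω, (2 * (X 1 ω + X 2 ω - 2 * Y ω)^2
            + 2 * (∑ k ∈ Finset.Icc 3 n, (X k ω - Y ω))^2) ∂P := by
        refine integral_mono hIab ((hIa.const_mul 2).add (hIb.const_mul 2)) fun ω => ?_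
        nlinarith [sq_nonneg (X 1 ω + X 2 ω - 2 * Y ω - ∑ k ∈ Finset.Icc 3 n, (X k ω - Y ω))]
      have hsplit : ∫ ω, (2 * (X 1 ω + X 2 ω - 2 * Y ω)^2
          + 2 * (∑ k ∈ Finset.Icc 3 n, (X k ω - Y ω))^2) ∂P
          = 2 * (∫ ω, (X 1 ω + X 2 ω - 2 * Y ω)^2 ∂P)
            + 2 * (∫ ω, (∑ k ∈ Finset.Icc 3 n, (X k ω - Y ω))^2 ∂P) := by
        rw [integral_add (hIa.const_mul 2) (hIb.const_mul 2), integral_const_mul,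
          integral_const_mul]
      have h1 : ∫ ω, (X 1 ω + X 2 ω - 2 * Y ω)^2 ∂P ≤ 16 := by
        calc ∫ ω, (X 1 ω + X 2 ω - 2 * Y ω)^2 ∂P ≤ ∫ _ω, (16 : ℝ) ∂P := by
              refine integral_mono hIa (integrable_const _) fun ω => ?_
              have := hsqle _ 4 (hba ω); norm_num at this ⊢; linarith
          _ = 16 := by simp
      have h2 := hsum n hn
      linarith
    calc ((n : ℝ)⁻¹)^2 * ∫ ω, (X 1 ω + X 2 ω - 2 * Y ω
          + ∑ k ∈ Finset.Icc 3 n, (X k ω - Y ω))^2 ∂P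
        ≤ ((n : ℝ)⁻¹)^2 * (32 + 8 * (n : ℝ)) := by
          refine mul_le_mul_of_nonneg_left hintle (by positivity)
      _ ≤ 24 / (n : ℝ) := by
          have hu : (n : ℝ)⁻¹ * n = 1 := inv_mul_cancel₀ (ne_of_gt hnpos)
          have hupos : 0 < (n : ℝ)⁻¹ := by positivity
          have h2u : 2 * (n : ℝ)⁻¹ ≤ 1 := by nlinarith
          rw [le_div_iff₀ hnpos]
          nlinarith [hu, h2u, hupos, sq_nonneg ((n : ℝ)⁻¹)]
  -- the L² error tends to 0
  have hεnonneg : ∀ n : ℕ, 0 ≤ ∫ ω, (S n ω / n - Y ω)^2 ∂P :=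
    fun n => integral_nonneg fun ω => sq_nonneg _
  have hεto : Tendsto (fun n : ℕ => ∫ ω, (S n ω / n - Y ω)^2 ∂P) atTop (𝓝 0) := by
    refine squeeze_zero' (Filter.Eventually.of_forall hεnonneg) ?_
      (tendsto_const_div_atTop_nhds_zero_nat 24)
    exact eventually_atTop.mpr ⟨2, fun n hn => hmain n hn⟩
  have hsqrtto : Tendsto (fun n : ℕ => Real.sqrt (∫ ω, (S n ω / n - Y ω)^2 ∂P))
      atTop (𝓝 0) := by
    have h := (Real.continuous_sqrt.tendsto 0).comp hεto
    simpa [Function.comp_def] using h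
  -- measurable / integrable facts about S n / n
  have hSm : ∀ n, Measurable (S n) := by
    intro n
    have hfe : S n = fun ω => ∑ k ∈ Finset.Icc 1 n, X k ω := funext fun ω => hS n ω
    rw [hfe]; exact Finset.measurable_sum _ fun k _ => hXmeas k
  have hSdivm : ∀ n : ℕ, Measurable (fun ω => S n ω / (n : ℝ)) :=
    fun n => (hSm n).div_const n
  have hbSdiv : ∀ (n : ℕ) ω, |S n ω / n| ≤ 1 := by
    intro n ω
    rcases Nat.eq_zero_or_pos n with h0 | hpos
    · subst h0; simp [hS]
    · have habs : |S n ω| ≤ (n : ℝ) := by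
        rw [hS]
        refine (Finset.abs_sum_le_sum_abs _ _).trans ?_
        calc ∑ k ∈ Finset.Icc 1 n, |X k ω| ≤ ∑ _k ∈ Finset.Icc 1 n, (1 : ℝ) :=
              Finset.sum_le_sum fun k hk => hbX k (Finset.mem_Icc.mp hk).1 ω
          _ = (n : ℝ) := by rw [Finset.sum_const, nsmul_eq_mul, Nat.card_Icc]; simp
      rw [abs_div, abs_of_nonneg (by positivity : (0:ℝ) ≤ (n:ℝ)),
        div_le_one (by exact_mod_cast hpos)]
      exact habs
  have hIntSdiv : ∀ n : ℕ, Integrable (fun ω => S n ω / n) P :=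
    fun n => hIntOfB _ 1 (hSdivm n) (hbSdiv n)
  have hdiffm : ∀ n : ℕ, Measurable (fun ω => S n ω / n - Y ω) :=
    fun n => (hSdivm n).sub hYm
  have habs_le : ∀ n : ℕ, ∫ ω, |S n ω / n - Y ω| ∂P
      ≤ Real.sqrt (∫ ω, (S n ω / n - Y ω)^2 ∂P) :=
    fun n => intAbsLeSqrt P (hdiffm n).aestronglyMeasurable (C := 2)
      (fun ω => habs2 _ _ (hbSdiv n ω) (hbY ω))
  -- joint distribution of (X 1, X 2)
  have hPA1 : (P {ω | X 1 ω = 1}).toReal = p := by rw [hX1p, ENNReal.toReal_ofReal hp.le]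
  have hPB1 : (P {ω | X 1 ω = -1}).toReal = q := by rw [hX1q, ENNReal.toReal_ofReal hq.le]
  have hPC1 : (P {ω | X 1 ω = 0}).toReal = r := by rw [hX1r, ENNReal.toReal_ofReal hr.le]
  have hA1F : ∀ c : ℝ, MeasurableSet[sigmaUpTo X 1] {ω | X 1 ω = c} :=
    fun c => hXFmeas 1 1 le_rfl le_rfl (measurableSet_singleton c)
  have hempty : ∀ c d : ℝ, c ≠ d → {ω | X 1 ω = c} ∩ {ω | X 1 ω = d} = (∅ : Set Ω) := by
    intro c d hcd; ext ω
    simp only [Set.mem_inter_iff, Set.mem_setOf_eq, Set.mem_empty_iff_false, iff_false,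
      not_and]
    intro h1 h2; exact hcd (h1.symm.trans h2)
  have hindint : ∀ (s : Set Ω), MeasurableSet s → ∀ (k : ℕ) (c : ℝ),
      ∫ ω in s, Set.indicator {ω' | X k ω' = c} (fun _ => (1 : ℝ)) ω ∂P
        = (P (s ∩ {ω' | X k ω' = c})).toReal := by
    intro s hs k c
    rw [setIntegral_indicator (hmeasEq k c), setIntegral_const, smul_eq_mul, mul_one, measureReal_def]
  have hrhsint : ∀ (s : Set Ω), MeasurableSet s → ∀ c d : ℝ,
      ∫ ω in s, (c * (if X 1 ω = 1 then (1 : ℝ) else 0)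
          + d * (if X 1 ω = -1 then (1 : ℝ) else 0)) ∂P
        = c * (P (s ∩ {ω | X 1 ω = 1})).toReal + d * (P (s ∩ {ω | X 1 ω = -1})).toReal := by
    intro s hs c d
    have h1 : (fun ω => c * (if X 1 ω = 1 then (1 : ℝ) else 0)
        + d * (if X 1 ω = -1 then (1 : ℝ) else 0))
        = fun ω => c * Set.indicator {ω' | X 1 ω' = 1} (fun _ => (1 : ℝ)) ω
          + d * Set.indicator {ω' | X 1 ω' = -1} (fun _ => (1 : ℝ)) ω := by
      funext ω; simp [Set.indicator_apply, Set.mem_setOf_eq]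
    rw [h1, integral_add (((hIntInd 1 1).const_mul c).restrict)
      (((hIntInd 1 (-1)).const_mul d).restrict), integral_const_mul, integral_const_mul,
      hindint s hs 1 1, hindint s hs 1 (-1)]
  have hstep : ∀ (s : Set Ω), MeasurableSet s → MeasurableSet[sigmaUpTo X 1] s →
      ((P (s ∩ {ω | X 2 ω = 1})).toReal
          = p * (P (s ∩ {ω | X 1 ω = 1})).toReal + q * (P (s ∩ {ω | X 1 ω = -1})).toReal)
        ∧ ((P (s ∩ {ω | X 2 ω = -1})).toReal
          = q * (P (s ∩ {ω | X 1 ω = 1})).toReal + p * (P (s ∩ {ω | X 1 ω = -1})).toReal) := by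
    intro s hs hsF
    constructor
    · have h := setIntegral_condExp (hFle 1) (hIntInd 2 1) hsF
      have h2 : ∫ ω in s, (P[Set.indicator {ω | X 2 ω = 1} (fun _ => (1 : ℝ)) |
          sigmaUpTo X 1]) ω ∂P
          = ∫ ω in s, (p * (if X 1 ω = 1 then (1 : ℝ) else 0)
            + q * (if X 1 ω = -1 then (1 : ℝ) else 0)) ∂P :=
        setIntegral_congr_ae hs (hX2p.mono fun ω hω _ => hω)
      rw [h, hindint s hs 2 1, hrhsint s hs p q] at h2
      exact h2
    · have h := setIntegral_condExp (hFle 1) (hIntInd 2 (-1)) hsF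
      have h2 : ∫ ω in s, (P[Set.indicator {ω | X 2 ω = -1} (fun _ => (1 : ℝ)) |
          sigmaUpTo X 1]) ω ∂P
          = ∫ ω in s, (q * (if X 1 ω = 1 then (1 : ℝ) else 0)
            + p * (if X 1 ω = -1 then (1 : ℝ) else 0)) ∂P :=
        setIntegral_congr_ae hs (hX2q.mono fun ω hω _ => hω)
      rw [h, hindint s hs 2 (-1), hrhsint s hs q p] at h2
      exact h2
  have h11 : (P ({ω | X 1 ω = 1} ∩ {ω | X 2 ω = 1})).toReal = p * p := by
    have h := (hstep _ (hmeasEq 1 1) (hA1F 1)).1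
    rw [Set.inter_self, hempty 1 (-1) (by norm_num), measure_empty, hPA1] at h
    simpa using h
  have h1m : (P ({ω | X 1 ω = 1} ∩ {ω | X 2 ω = -1})).toReal = q * p := by
    have h := (hstep _ (hmeasEq 1 1) (hA1F 1)).2
    rw [Set.inter_self, hempty 1 (-1) (by norm_num), measure_empty, hPA1] at h
    simpa using h
  have hm1 : (P ({ω | X 1 ω = -1} ∩ {ω | X 2 ω = 1})).toReal = q * q := by
    have h := (hstep _ (hmeasEq 1 (-1)) (hA1F (-1))).1
    rw [Set.inter_self, hempty (-1) 1 (by norm_num), measure_empty, hPB1] at h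
    simpa using h
  have hmm : (P ({ω | X 1 ω = -1} ∩ {ω | X 2 ω = -1})).toReal = p * q := by
    have h := (hstep _ (hmeasEq 1 (-1)) (hA1F (-1))).2
    rw [Set.inter_self, hempty (-1) 1 (by norm_num), measure_empty, hPB1] at h
    simpa using h
  have h01 : (P ({ω | X 1 ω = 0} ∩ {ω | X 2 ω = 1})).toReal = 0 := by
    have h := (hstep _ (hmeasEq 1 0) (hA1F 0)).1
    rw [hempty 0 1 (by norm_num), hempty 0 (-1) (by norm_num), measure_empty] at h
    simpa using h
  have h0m : (P ({ω | X 1 ω = 0} ∩ {ω | X 2 ω = -1})).toReal = 0 := by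
    have h := (hstep _ (hmeasEq 1 0) (hA1F 0)).2
    rw [hempty 0 1 (by norm_num), hempty 0 (-1) (by norm_num), measure_empty] at h
    simpa using h
  have hcover : ∀ s : Set Ω, MeasurableSet s →
      (P (s ∩ {ω | X 2 ω = 0})).toReal
        = (P s).toReal - (P (s ∩ {ω | X 2 ω = 1})).toReal
          - (P (s ∩ {ω | X 2 ω = -1})).toReal := by
    intro s hs
    have hdisj1 : Disjoint (s ∩ {ω | X 2 ω = 1}) (s ∩ {ω | X 2 ω = -1}) := by
      rw [Set.disjoint_left]
      rintro ω ⟨_, h1⟩ ⟨_, h2⟩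
      simp only [Set.mem_setOf_eq] at h1 h2
      rw [h1] at h2; norm_num at h2
    have hdisj2 : Disjoint ((s ∩ {ω | X 2 ω = 1}) ∪ (s ∩ {ω | X 2 ω = -1}))
        (s ∩ {ω | X 2 ω = 0}) := by
      rw [Set.disjoint_left]
      rintro ω (⟨_, h1⟩ | ⟨_, h1⟩) ⟨_, h2⟩ <;>
        (simp only [Set.mem_setOf_eq] at h1 h2; rw [h1] at h2; norm_num at h2)
    have hsplit : s = (s ∩ {ω | X 2 ω = 1}) ∪ (s ∩ {ω | X 2 ω = -1})
        ∪ (s ∩ {ω | X 2 ω = 0}) := by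
      ext ω
      simp only [Set.mem_union, Set.mem_inter_iff, Set.mem_setOf_eq]
      constructor
      · intro hω
        rcases hXval 2 (by norm_num) ω with h | h | h
        · exact Or.inl (Or.inl ⟨hω, h⟩)
        · exact Or.inl (Or.inr ⟨hω, h⟩)
        · exact Or.inr ⟨hω, h⟩
      · rintro ((⟨h, _⟩ | ⟨h, _⟩) | ⟨h, _⟩) <;> exact h
    have e1 : P s = P ((s ∩ {ω | X 2 ω = 1}) ∪ (s ∩ {ω | X 2 ω = -1}))
        + P (s ∩ {ω | X 2 ω = 0}) := by
      conv_lhs => rw [hsplit]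
      exact measure_union hdisj2 (hs.inter (hmeasEq 2 0))
    rw [measure_union hdisj1 (hs.inter (hmeasEq 2 (-1)))] at e1
    have ha := measure_ne_top P (s ∩ {ω | X 2 ω = 1})
    have hb := measure_ne_top P (s ∩ {ω | X 2 ω = -1})
    have hc := measure_ne_top P (s ∩ {ω | X 2 ω = 0})
    rw [e1, ENNReal.toReal_add (ENNReal.add_ne_top.mpr ⟨ha, hb⟩) hc, ENNReal.toReal_add ha hb]
    ring
  have h10 : (P ({ω | X 1 ω = 1} ∩ {ω | X 2 ω = 0})).toReal = p * r := by
    rw [hcover _ (hmeasEq 1 1), hPA1, h11, h1m, hrr]; ring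
  have hm0 : (P ({ω | X 1 ω = -1} ∩ {ω | X 2 ω = 0})).toReal = q * r := by
    rw [hcover _ (hmeasEq 1 (-1)), hPB1, hm1, hmm, hrr]; ring
  have h00 : (P ({ω | X 1 ω = 0} ∩ {ω | X 2 ω = 0})).toReal = r := by
    rw [hcover _ (hmeasEq 1 0), hPC1, h01, h0m]; ring
  -- the law of Y
  have key : ∀ g : ℝ → ℝ, ∫ ω, g (Y ω) ∂P
      = p^2 * g (p - q) + p * r * g ((p - q) / 2) + (p * q + q^2 + r) * g 0
        + q * r * g (-((p - q) / 2)) + p * q * g (-(p - q)) := by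
    intro g
    have hpt : (fun ω => g (Y ω)) = fun ω =>
        ({ω | X 1 ω = 1} ∩ {ω | X 2 ω = 1}).indicator (fun _ => g (p - q)) ω
        + ({ω | X 1 ω = 1} ∩ {ω | X 2 ω = -1}).indicator (fun _ => g 0) ω
        + ({ω | X 1 ω = 1} ∩ {ω | X 2 ω = 0}).indicator (fun _ => g ((p - q) / 2)) ω
        + ({ω | X 1 ω = -1} ∩ {ω | X 2 ω = 1}).indicator (fun _ => g 0) ω
        + ({ω | X 1 ω = -1} ∩ {ω | X 2 ω = -1}).indicator (fun _ => g (-(p - q))) ω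
        + ({ω | X 1 ω = -1} ∩ {ω | X 2 ω = 0}).indicator (fun _ => g (-((p - q) / 2))) ω
        + ({ω | X 1 ω = 0} ∩ {ω | X 2 ω = 1}).indicator (fun _ => g ((p - q) / 2)) ω
        + ({ω | X 1 ω = 0} ∩ {ω | X 2 ω = -1}).indicator (fun _ => g (-((p - q) / 2))) ω
        + ({ω | X 1 ω = 0} ∩ {ω | X 2 ω = 0}).indicator (fun _ => g 0) ω := by
      have hiv : ∀ (c1 c2 v : ℝ) (ω : Ω),
          ({ω' | X 1 ω' = c1} ∩ {ω' | X 2 ω' = c2}).indicator (fun _ => v) ω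
            = if (X 1 ω = c1 ∧ X 2 ω = c2) then v else 0 := by
        intro c1 c2 v ω
        by_cases h : X 1 ω = c1 ∧ X 2 ω = c2
        · rw [if_pos h]
          exact Set.indicator_of_mem
            (show ω ∈ {ω' | X 1 ω' = c1} ∩ {ω' | X 2 ω' = c2} from h) _
        · rw [if_neg h]
          exact Set.indicator_of_notMem
            (show ω ∉ {ω' | X 1 ω' = c1} ∩ {ω' | X 2 ω' = c2} from h) _
      funext ω
      rw [hYapp]
      simp only [hiv]
      rcases hXval 1 le_rfl ω with h1' | h1' | h1' <;>
        rcases hXval 2 (by norm_num) ω with h2' | h2' | h2' <;>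
        rw [h1', h2'] <;> norm_num <;> (try (congr 1; ring))
    have hmeas12 : ∀ c1 c2 : ℝ, MeasurableSet ({ω | X 1 ω = c1} ∩ {ω | X 2 ω = c2}) :=
      fun c1 c2 => (hmeasEq 1 c1).inter (hmeasEq 2 c2)
    have hii : ∀ (c1 c2 e : ℝ),
        Integrable (({ω | X 1 ω = c1} ∩ {ω | X 2 ω = c2}).indicator (fun _ => e)) P :=
      fun c1 c2 e => (integrable_const e).indicator (hmeas12 c1 c2)
    have I1 := hii 1 1 (g (p - q)); have I2 := hii 1 (-1) (g 0)
    have I3 := hii 1 0 (g ((p - q) / 2)); have I4 := hii (-1) 1 (g 0)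
    have I5 := hii (-1) (-1) (g (-(p - q))); have I6 := hii (-1) 0 (g (-((p - q) / 2)))
    have I7 := hii 0 1 (g ((p - q) / 2)); have I8 := hii 0 (-1) (g (-((p - q) / 2)))
    have I9 := hii 0 0 (g 0)
    have J2 : Integrable (fun ω => ({ω | X 1 ω = 1} ∩ {ω | X 2 ω = 1}).indicator (fun _ => g (p - q)) ω + ({ω | X 1 ω = 1} ∩ {ω | X 2 ω = (-1)}).indicator (fun _ => g 0) ω) P := I1.add I2
    have J3 : Integrable (fun ω => ({ω | X 1 ω = 1} ∩ {ω | X 2 ω = 1}).indicator (fun _ => g (p - q)) ω + ({ω | X 1 ω = 1} ∩ {ω | X 2 ω = (-1)}).indicator (fun _ => g 0) ω + ({ω | X 1 ω = 1} ∩ {ω | X 2 ω = 0}).indicator (fun _ => g ((p - q) / 2)) ω) P := J2.add I3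
    have J4 : Integrable (fun ω => ({ω | X 1 ω = 1} ∩ {ω | X 2 ω = 1}).indicator (fun _ => g (p - q)) ω + ({ω | X 1 ω = 1} ∩ {ω | X 2 ω = (-1)}).indicator (fun _ => g 0) ω + ({ω | X 1 ω = 1} ∩ {ω | X 2 ω = 0}).indicator (fun _ => g ((p - q) / 2)) ω + ({ω | X 1 ω = (-1)} ∩ {ω | X 2 ω = 1}).indicator (fun _ => g 0) ω) P := J3.add I4
    have J5 : Integrable (fun ω => ({ω | X 1 ω = 1} ∩ {ω | X 2 ω = 1}).indicator (fun _ => g (p - q)) ω + ({ω | X 1 ω = 1} ∩ {ω | X 2 ω = (-1)}).indicator (fun _ => g 0) ω + ({ω | X 1 ω = 1} ∩ {ω | X 2 ω = 0}).indicator (fun _ => g ((p - q) / 2)) ω + ({ω | X 1 ω = (-1)} ∩ {ω | X 2 ω = 1}).indicator (fun _ => g 0) ω + ({ω | X 1 ω = (-1)} ∩ {ω | X 2 ω = (-1)}).indicator (fun _ => g (-(p - q))) ω) P := J4.add I5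
    have J6 : Integrable (fun ω => ({ω | X 1 ω = 1} ∩ {ω | X 2 ω = 1}).indicator (fun _ => g (p - q)) ω + ({ω | X 1 ω = 1} ∩ {ω | X 2 ω = (-1)}).indicator (fun _ => g 0) ω + ({ω | X 1 ω = 1} ∩ {ω | X 2 ω = 0}).indicator (fun _ => g ((p - q) / 2)) ω + ({ω | X 1 ω = (-1)} ∩ {ω | X 2 ω = 1}).indicator (fun _ => g 0) ω + ({ω | X 1 ω = (-1)} ∩ {ω | X 2 ω = (-1)}).indicator (fun _ => g (-(p - q))) ω + ({ω | X 1 ω = (-1)} ∩ {ω | X 2 ω = 0}).indicator (fun _ => g (-((p - q) / 2))) ω) P := J5.add I6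
    have J7 : Integrable (fun ω => ({ω | X 1 ω = 1} ∩ {ω | X 2 ω = 1}).indicator (fun _ => g (p - q)) ω + ({ω | X 1 ω = 1} ∩ {ω | X 2 ω = (-1)}).indicator (fun _ => g 0) ω + ({ω | X 1 ω = 1} ∩ {ω | X 2 ω = 0}).indicator (fun _ => g ((p - q) / 2)) ω + ({ω | X 1 ω = (-1)} ∩ {ω | X 2 ω = 1}).indicator (fun _ => g 0) ω + ({ω | X 1 ω = (-1)} ∩ {ω | X 2 ω = (-1)}).indicator (fun _ => g (-(p - q))) ω + ({ω | X 1 ω = (-1)} ∩ {ω | X 2 ω = 0}).indicator (fun _ => g (-((p - q) / 2))) ω + ({ω | X 1 ω = 0} ∩ {ω | X 2 ω = 1}).indicator (fun _ => g ((p - q) / 2)) ω) P := J6.add I7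
    have J8 : Integrable (fun ω => ({ω | X 1 ω = 1} ∩ {ω | X 2 ω = 1}).indicator (fun _ => g (p - q)) ω + ({ω | X 1 ω = 1} ∩ {ω | X 2 ω = (-1)}).indicator (fun _ => g 0) ω + ({ω | X 1 ω = 1} ∩ {ω | X 2 ω = 0}).indicator (fun _ => g ((p - q) / 2)) ω + ({ω | X 1 ω = (-1)} ∩ {ω | X 2 ω = 1}).indicator (fun _ => g 0) ω + ({ω | X 1 ω = (-1)} ∩ {ω | X 2 ω = (-1)}).indicator (fun _ => g (-(p - q))) ω + ({ω | X 1 ω = (-1)} ∩ {ω | X 2 ω = 0}).indicator (fun _ => g (-((p - q) / 2))) ω + ({ω | X 1 ω = 0} ∩ {ω | X 2 ω = 1}).indicator (fun _ => g ((p - q) / 2)) ω + ({ω | X 1 ω = 0} ∩ {ω | X 2 ω = (-1)}).indicator (fun _ => g (-((p - q) / 2))) ω) P := J7.add I8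
    rw [hpt,
      integral_add J8 I9, integral_add J7 I8, integral_add J6 I7, integral_add J5 I6,
      integral_add J4 I5, integral_add J3 I4, integral_add J2 I3, integral_add I1 I2,
      integral_indicator_const _ (hmeas12 1 1), integral_indicator_const _ (hmeas12 1 (-1)),
      integral_indicator_const _ (hmeas12 1 0), integral_indicator_const _ (hmeas12 (-1) 1),
      integral_indicator_const _ (hmeas12 (-1) (-1)),
      integral_indicator_const _ (hmeas12 (-1) 0),
      integral_indicator_const _ (hmeas12 0 1), integral_indicator_const _ (hmeas12 0 (-1)),
      integral_indicator_const _ (hmeas12 0 0)]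
    simp only [smul_eq_mul, measureReal_def]
    rw [h11, h1m, h10, hm1, hmm, hm0, h01, h0m, h00]
    ring
  -- values of the moments of Y
  have hEY : ∫ ω, Y ω ∂P = (p - q)^2 / 2 * (1 + p - q) := by
    have h := key (fun x => x)
    refine h.trans ?_
    rw [hrr]; ring
  have hEY2 : ∫ ω, (Y ω)^2 ∂P = (p - q)^2 / 4 * ((p + q) * (1 + 3 * p - q)) := by
    have h := key (fun x => x^2)
    refine h.trans ?_
    rw [hrr]; ring
  -- convergence of the mean
  have hmean : Tendsto (fun n : ℕ => ∫ ω, S n ω / n ∂P) atTop (𝓝 (∫ ω, Y ω ∂P)) := by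
    rw [tendsto_iff_dist_tendsto_zero]
    refine squeeze_zero (fun n => dist_nonneg) (fun n => ?_) hsqrtto
    rw [Real.dist_eq, ← integral_sub (hIntSdiv n) hIntY]
    calc |∫ ω, (S n ω / n - Y ω) ∂P| ≤ ∫ ω, |S n ω / n - Y ω| ∂P := by
          simpa [Real.norm_eq_abs] using
            norm_integral_le_integral_norm (μ := P) (fun ω => S n ω / n - Y ω)
      _ ≤ _ := habs_le n
  -- convergence of the second moment
  have hIntSq : ∀ n : ℕ, Integrable (fun ω => (S n ω / n)^2) P := fun n =>
    hIntOfB _ 1 ((hSdivm n).pow_const 2) fun ω => by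
      rw [abs_of_nonneg (sq_nonneg _)]
      have := hsqle _ 1 (hbSdiv n ω); norm_num at this ⊢; linarith
  have hIntY2 : Integrable (fun ω => (Y ω)^2) P :=
    hIntOfB _ 1 (hYm.pow_const 2) fun ω => by
      rw [abs_of_nonneg (sq_nonneg _)]
      have := hsqle _ 1 (hbY ω); norm_num at this ⊢; linarith
  have hsqto : Tendsto (fun n : ℕ => ∫ ω, (S n ω / n)^2 ∂P) atTop
      (𝓝 (∫ ω, (Y ω)^2 ∂P)) := by
    rw [tendsto_iff_dist_tendsto_zero]
    refine squeeze_zero (fun n => dist_nonneg) (fun n => ?_)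
      (by simpa using hsqrtto.const_mul (2 : ℝ))
    rw [Real.dist_eq, ← integral_sub (hIntSq n) hIntY2]
    calc |∫ ω, ((S n ω / n)^2 - (Y ω)^2) ∂P| ≤ ∫ ω, |(S n ω / n)^2 - (Y ω)^2| ∂P := by
          simpa [Real.norm_eq_abs] using
            norm_integral_le_integral_norm (μ := P) (fun ω => (S n ω / n)^2 - (Y ω)^2)
      _ ≤ ∫ ω, 2 * |S n ω / n - Y ω| ∂P := by
          refine integral_mono ((hIntSq n).sub hIntY2).abs
            ((((hIntSdiv n).sub hIntY).abs).const_mul 2) fun ω => ?_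
          have hfac : (S n ω / n)^2 - (Y ω)^2 = (S n ω / n - Y ω) * (S n ω / n + Y ω) := by
            ring
          rw [hfac, abs_mul]
          have habs' : |S n ω / n + Y ω| ≤ 2 :=
            (abs_add_le _ _).trans (by linarith [hbSdiv n ω, hbY ω])
          nlinarith [abs_nonneg (S n ω / n - Y ω)]
      _ = 2 * ∫ ω, |S n ω / n - Y ω| ∂P := integral_const_mul 2 _
      _ ≤ 2 * Real.sqrt (∫ ω, (S n ω / n - Y ω)^2 ∂P) := by linarith [habs_le n]
  -- variance identity
  have hvareq : ∀ n : ℕ, variance (fun ω => S n ω / n) P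
      = ∫ ω, (S n ω / n)^2 ∂P - (∫ ω, S n ω / n ∂P)^2 := by
    intro n
    rw [variance_eq_sub (MemLp.of_bound (hSdivm n).aestronglyMeasurable 1
      (Filter.Eventually.of_forall fun ω => by
        rw [Real.norm_eq_abs]; exact hbSdiv n ω))]
    congr 1
  -- convergence in measure (via Chebyshev)
  have hTIM : ∀ ε : ℝ, 0 < ε →
      Tendsto (fun n : ℕ => P {ω | ε ≤ dist (S n ω / ↑n) (Y ω)}) atTop (𝓝 0) := by
    intro ε hε
    have hsetsq : ∀ n : ℕ, {ω | ε ≤ dist (S n ω / ↑n) (Y ω)}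
        = {ω | ε^2 ≤ (S n ω / ↑n - Y ω)^2} := by
      intro n; ext ω
      simp only [Set.mem_setOf_eq, Real.dist_eq]
      constructor
      · intro h; nlinarith [abs_nonneg (S n ω / ↑n - Y ω), sq_abs (S n ω / ↑n - Y ω)]
      · intro h; by_contra h'; push_neg at h'
        nlinarith [abs_nonneg (S n ω / ↑n - Y ω), sq_abs (S n ω / ↑n - Y ω)]
    have hb : ∀ n : ℕ, P {ω | ε ≤ dist (S n ω / ↑n) (Y ω)}
        ≤ ENNReal.ofReal ((∫ ω, (S n ω / ↑n - Y ω)^2 ∂P) / ε^2) := by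
      intro n
      rw [hsetsq n]
      have hint : Integrable (fun ω => (S n ω / ↑n - Y ω)^2) P := by
        refine hIntOfB _ 4 ((hdiffm n).pow_const 2) fun ω => ?_
        rw [abs_of_nonneg (sq_nonneg _)]
        have := hsqle _ 2 (habs2 _ _ (hbSdiv n ω) (hbY ω)); norm_num at this ⊢; linarith
      have hmark := mul_meas_ge_le_integral_of_nonneg
        (Filter.Eventually.of_forall fun ω => sq_nonneg (S n ω / ↑n - Y ω)) hint (ε^2)
      rw [← ENNReal.ofReal_toReal (measure_ne_top P _)]
      apply ENNReal.ofReal_le_ofReal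
      rw [le_div_iff₀ (by positivity)]
      simpa [mul_comm, measureReal_def] using hmark
    refine tendsto_of_tendsto_of_tendsto_of_le_of_le tendsto_const_nhds ?_
      (fun n => zero_le) hb
    have h0 : Tendsto (fun n : ℕ => (∫ ω, (S n ω / ↑n - Y ω)^2 ∂P) / ε^2) atTop (𝓝 0) := by
      simpa using hεto.div_const (ε^2)
    simpa using ENNReal.tendsto_ofReal h0
  refine ⟨?_, ?_, ?_⟩
  · -- convergence in distribution
    intro f
    have hmap : ∀ n : ℕ, ∫ x, f x ∂(Measure.map (fun ω => S n ω / n) P)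
        = ∫ ω, f (S n ω / n) ∂P :=
      fun n => integral_map (hSdivm n).aemeasurable f.continuous.aestronglyMeasurable
    simp only [hmap]
    have hd : ∀ a : ℝ, Integrable (⇑f) (Measure.dirac a) := fun a => f.integrable _
    have h5 : ∀ c a : ℝ, Integrable (⇑f) (ENNReal.ofReal c • Measure.dirac a) :=
      fun c a => (hd a).smul_measure ENNReal.ofReal_ne_top
    have i1 := h5 (p^2) (p - q); have i2 := h5 (p * r) ((p - q) / 2)
    have i3 := h5 (p * q + q^2 + r) 0; have i4 := h5 (q * r) (-((p - q) / 2))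
    have i5 := h5 (p * q) (-(p - q))
    have hν : ∫ x, f x ∂(ENNReal.ofReal (p ^ 2) • Measure.dirac (p - q)
        + ENNReal.ofReal (p * r) • Measure.dirac ((p - q) / 2)
        + ENNReal.ofReal (p * q + q ^ 2 + r) • Measure.dirac 0
        + ENNReal.ofReal (q * r) • Measure.dirac (-((p - q) / 2))
        + ENNReal.ofReal (p * q) • Measure.dirac (-(p - q)))
        = p^2 * f (p - q) + p * r * f ((p - q) / 2) + (p * q + q^2 + r) * f 0
          + q * r * f (-((p - q) / 2)) + p * q * f (-(p - q)) := by
      rw [integral_add_measure (((i1.add_measure i2).add_measure i3).add_measure i4) i5,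
        integral_add_measure ((i1.add_measure i2).add_measure i3) i4,
        integral_add_measure (i1.add_measure i2) i3,
        integral_add_measure i1 i2,
        integral_smul_measure, integral_smul_measure, integral_smul_measure,
        integral_smul_measure, integral_smul_measure,
        integral_dirac, integral_dirac, integral_dirac, integral_dirac, integral_dirac,
        ENNReal.toReal_ofReal (by positivity), ENNReal.toReal_ofReal (by positivity),
        ENNReal.toReal_ofReal (by positivity), ENNReal.toReal_ofReal (by positivity),
        ENNReal.toReal_ofReal (by positivity)]
      simp only [smul_eq_mul]
    rw [hν, ← key (⇑f)]
    apply tendsto_of_subseq_tendsto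
    intro ns hns
    have hsub : TendstoInMeasure P (fun i ω => S (ns i) ω / (ns i : ℕ)) atTop Y :=
      tendstoInMeasure_iff_dist.mpr fun ε hε => (hTIM ε hε).comp hns
    obtain ⟨ms, _hms, hae⟩ := hsub.exists_seq_tendsto_ae
    refine ⟨ms, ?_⟩
    refine tendsto_integral_of_dominated_convergence (fun _ => ‖f‖)
      (fun i => (f.continuous.measurable.comp (hSdivm (ns (ms i)))).aestronglyMeasurable)
      (integrable_const _)
      (fun i => Filter.Eventually.of_forall fun ω => f.norm_coe_le_norm _) ?_
    filter_upwards [hae] with ω hω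
    exact (f.continuous.tendsto (Y ω)).comp hω
  · -- convergence of the mean
    have hval : (p - q)^2 / 2 * (1 + p - q) = ∫ ω, Y ω ∂P := hEY.symm
    rw [hval]
    exact hmean
  · -- convergence of the variance
    have hval : (p - q)^2 / 4 * ((p + q) * (1 + 3 * p - q)
        - (p - q)^2 * (1 + (p - q))^2)
        = ∫ ω, (Y ω)^2 ∂P - (∫ ω, Y ω ∂P)^2 := by
      rw [hEY2, hEY]; ring
    simp only [hvareq]
    rw [hval]
    exact hsqto.sub (hmean.pow 2)
end
end

section
/- For every n ≥ 1, ℙ(X_n ≠ 0) = (p+q)^n, and consequently ℙ(X_n ≠ 0 for infinitely many n) = 0 (i.e. almost surely there exists n₀ such that X_n = 0 for all n > n₀). -/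
open MeasureTheory ProbabilityTheory Filter Real
open scoped ENNReal NNReal Topology Classical

noncomputable section

/-- for the ERWD remembering only the most recent step,
`ℙ(Xₙ ≠ 0) = (p+q)ⁿ` for every `n ≥ 1`, and almost surely `Xₙ ≠ 0` for only finitely
many `n`. -/
theorem erwd_recent_step_memory_eventually_zero
    {Ω : Type*} [MeasurableSpace Ω] (P : Measure Ω) [IsProbabilityMeasure P]
    (p q r : ℝ) (hp : 0 < p) (hp1 : p < 1) (hq : 0 < q) (hq1 : q < 1)
    (hr : 0 < r) (hr1 : r < 1) (hpqr : p + q + r = 1)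
    (X : ℕ → Ω → ℝ) (hXmeas : ∀ n, Measurable (X n))
    (hXval : ∀ n, 1 ≤ n → ∀ ω, X n ω = 1 ∨ X n ω = -1 ∨ X n ω = 0)
    (hX1p : P {ω | X 1 ω = 1} = ENNReal.ofReal p)
    (hX1q : P {ω | X 1 ω = -1} = ENNReal.ofReal q)
    (hX1r : P {ω | X 1 ω = 0} = ENNReal.ofReal r)
    (hcondp : ∀ n : ℕ, 1 ≤ n →
      P[Set.indicator {ω | X (n + 1) ω = 1} (fun _ => (1 : ℝ)) | sigmaUpTo X n]
        =ᵐ[P] fun ω =>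
          p * (if X n ω = 1 then (1 : ℝ) else 0) + q * (if X n ω = -1 then (1 : ℝ) else 0))
    (hcondq : ∀ n : ℕ, 1 ≤ n →
      P[Set.indicator {ω | X (n + 1) ω = -1} (fun _ => (1 : ℝ)) | sigmaUpTo X n]
        =ᵐ[P] fun ω =>
          q * (if X n ω = 1 then (1 : ℝ) else 0) + p * (if X n ω = -1 then (1 : ℝ) else 0))
    :
    (∀ n : ℕ, 1 ≤ n → P {ω | X n ω ≠ 0} = ENNReal.ofReal ((p + q) ^ n)) ∧
    P {ω | ∃ᶠ n in atTop, X n ω ≠ 0} = 0 := by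
  have hm : ∀ n, sigmaUpTo X n ≤ ‹MeasurableSpace Ω› :=
    fun n => Measurable.comap_le (measurable_pi_lambda _ fun k => hXmeas _)
  have hA : ∀ (n : ℕ) (c : ℝ), MeasurableSet {ω | X n ω = c} := by
    intro n c
    exact (hXmeas n) (measurableSet_singleton c)
  -- indicator integrals
  have hind : ∀ (n : ℕ) (c : ℝ),
      (fun ω => (if X n ω = c then (1 : ℝ) else 0)) =
        Set.indicator {ω | X n ω = c} (fun _ => (1 : ℝ)) := by
    intro n c; funext ω; simp [Set.indicator_apply, Set.mem_setOf_eq]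
  have hintind : ∀ (n : ℕ) (c : ℝ),
      Integrable (Set.indicator {ω | X n ω = c} (fun _ => (1 : ℝ))) P :=
    fun n c => (integrable_const (1 : ℝ)).indicator (hA n c)
  have hintegral : ∀ (n : ℕ) (c : ℝ),
      ∫ ω, Set.indicator {ω | X n ω = c} (fun _ => (1 : ℝ)) ω ∂P
        = (P {ω | X n ω = c}).toReal := by
    intro n c
    rw [integral_indicator_const (1 : ℝ) (hA n c)]
    simp
    rfl
  -- the one-step recursion, for each sign
  have step : ∀ (n : ℕ), 1 ≤ n → ∀ (c : ℝ) (a b : ℝ),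
      (P[Set.indicator {ω | X (n + 1) ω = c} (fun _ => (1 : ℝ)) | sigmaUpTo X n]
        =ᵐ[P] fun ω =>
          a * (if X n ω = 1 then (1 : ℝ) else 0) + b * (if X n ω = -1 then (1 : ℝ) else 0)) →
      (P {ω | X (n + 1) ω = c}).toReal
        = a * (P {ω | X n ω = 1}).toReal + b * (P {ω | X n ω = -1}).toReal := by
    intro n hn c a b hcond
    have h1 : ∫ ω, Set.indicator {ω | X (n + 1) ω = c} (fun _ => (1 : ℝ)) ω ∂P
        = ∫ ω, (a * (if X n ω = 1 then (1 : ℝ) else 0)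
            + b * (if X n ω = -1 then (1 : ℝ) else 0)) ∂P := by
      rw [← integral_condExp (hm n)]
      exact integral_congr_ae hcond
    rw [hintegral (n + 1) c] at h1
    rw [h1]
    have h2 : ∀ ω, a * (if X n ω = 1 then (1 : ℝ) else 0)
        + b * (if X n ω = -1 then (1 : ℝ) else 0)
        = a * Set.indicator {ω | X n ω = 1} (fun _ => (1 : ℝ)) ω
        + b * Set.indicator {ω | X n ω = -1} (fun _ => (1 : ℝ)) ω := by
      intro ω
      have e1 := congrFun (hind n 1) ω
      have e2 := congrFun (hind n (-1)) ω
      rw [e1, e2]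
    simp_rw [h2]
    rw [integral_add ((hintind n 1).const_mul a) ((hintind n (-1)).const_mul b),
      integral_const_mul, integral_const_mul, hintegral n 1, hintegral n (-1)]
  -- split {X n ≠ 0} into the two sign events
  have hsplit : ∀ (n : ℕ), 1 ≤ n →
      P {ω | X n ω ≠ 0} = P {ω | X n ω = 1} + P {ω | X n ω = -1} := by
    intro n hn
    have hset : {ω | X n ω ≠ 0} = {ω | X n ω = 1} ∪ {ω | X n ω = -1} := by
      ext ω
      simp only [Set.mem_setOf_eq, Set.mem_union]
      constructor
      · intro h
        rcases hXval n hn ω with h1 | h1 | h1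
        · exact Or.inl h1
        · exact Or.inr h1
        · exact absurd h1 h
      · rintro (h1 | h1) <;> rw [h1] <;> norm_num
    rw [hset]
    refine measure_union ?_ (hA n (-1))
    rw [Set.disjoint_left]
    intro ω h1 h2
    simp only [Set.mem_setOf_eq] at h1 h2
    rw [h1] at h2; norm_num at h2
  have hpq0 : 0 ≤ p + q := by positivity
  -- main formula by induction
  have main : ∀ (n : ℕ), 1 ≤ n →
      P {ω | X n ω = 1} + P {ω | X n ω = -1} = ENNReal.ofReal ((p + q) ^ n) := by
    intro n hn
    induction n with
    | zero => omega
    | succ n ih =>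
      rcases Nat.eq_or_lt_of_le hn with h | h
      · -- n + 1 = 1
        have hn0 : n = 0 := by omega
        subst hn0
        rw [hX1p, hX1q, ← ENNReal.ofReal_add hp.le hq.le, pow_one]
      · have hn1 : 1 ≤ n := by omega
        have ihn := ih hn1
        have key1 := step n hn1 1 p q (hcondp n hn1)
        have key2 := step n hn1 (-1) q p (hcondq n hn1)
        have hfin1 : P {ω | X n ω = 1} ≠ ⊤ := measure_ne_top _ _
        have hfin2 : P {ω | X n ω = -1} ≠ ⊤ := measure_ne_top _ _
        have hsum : (P {ω | X n ω = 1}).toReal + (P {ω | X n ω = -1}).toReal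
            = (p + q) ^ n := by
          rw [← ENNReal.toReal_add hfin1 hfin2, ihn, ENNReal.toReal_ofReal (by positivity)]
        have h1 : (P {ω | X (n + 1) ω = 1}).toReal + (P {ω | X (n + 1) ω = -1}).toReal
            = (p + q) ^ (n + 1) := by
          rw [key1, key2, pow_succ]
          ring_nf
          nlinarith [hsum]
        rw [← ENNReal.ofReal_toReal (a := P {ω | X (n+1) ω = 1} + P {ω | X (n+1) ω = -1})
            (by finiteness),
          ENNReal.toReal_add (measure_ne_top _ _) (measure_ne_top _ _), h1]
  have formula : ∀ n : ℕ, 1 ≤ n → P {ω | X n ω ≠ 0} = ENNReal.ofReal ((p + q) ^ n) := by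
    intro n hn
    rw [hsplit n hn, main n hn]
  refine ⟨formula, ?_⟩
  -- Borel–Cantelli
  have hpq1 : p + q < 1 := by linarith
  have hbound : ∀ n : ℕ, P {ω | X n ω ≠ 0} ≤ ENNReal.ofReal ((p + q) ^ n) := by
    intro n
    rcases Nat.eq_zero_or_pos n with h | h
    · subst h
      simp only [pow_zero, ENNReal.ofReal_one]
      exact prob_le_one
    · exact le_of_eq (formula n h)
  have htsum : (∑' n : ℕ, P {ω | X n ω ≠ 0}) ≠ ⊤ := by
    refine ne_top_of_le_ne_top ?_ (ENNReal.tsum_le_tsum hbound)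
    have : ∀ n : ℕ, ENNReal.ofReal ((p + q) ^ n) = (ENNReal.ofReal (p + q)) ^ n := by
      intro n; rw [ENNReal.ofReal_pow hpq0]
    simp_rw [this]
    rw [ENNReal.tsum_geometric]
    refine ENNReal.inv_ne_top.mpr ?_
    have hlt : ENNReal.ofReal (p + q) < 1 := by
      rw [← ENNReal.ofReal_one]
      exact ENNReal.ofReal_lt_ofReal_iff_of_nonneg hpq0 |>.mpr hpq1
    exact (tsub_pos_of_lt hlt).ne'
  have hls := MeasureTheory.measure_limsup_atTop_eq_zero
      (μ := P) (s := fun n => {ω | X n ω ≠ 0}) htsum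
  have hseteq : {ω | ∃ᶠ n in atTop, X n ω ≠ 0}
      = limsup (fun n => {ω | X n ω ≠ 0}) atTop := by
    ext ω
    rw [mem_limsup_iff_frequently_mem]
    rfl
  rw [hseteq]
  exact hls
end
end
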